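/- arXiv:2504.09272 — 7 statements merged into one kernel-verified Lean document; each statement's English description precedes it below -/
import Mathlib

section
/- A vector y ∈ ℝ^n solves the variational inequality VI(u) if and only if there exists q ∈ ℝ^{m×d} such that Ay + 𝕂*q = u, ⟨q_j, (𝕂y)_j⟩ = |(𝕂y)_j| for all j = 1,…,m, and |q_j| ≤ 1 for all j = 1,…,m. -/
open scoped RealInnerProductSpace BigOperators Classical Topology

noncomputable section

abbrev Euc (n : ℕ) := EuclideanSpace ℝ (Fin n)
abbrev Rows (m d : ℕ) := PiLp 2 (fun _ : Fin m => EuclideanSpace ℝ (Fin d))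

variable {n m d : ℕ}

/-- `y` solves the variational inequality VI(u). -/
def IsVISol (A : Euc n →ₗ[ℝ] Euc n) (K : Euc n →ₗ[ℝ] Rows m d) (u y : Euc n) : Prop :=
  ∀ v : Euc n, ⟪A y, v - y⟫ + ∑ j, (‖K v j‖ - ‖K y j‖) ≥ ⟪u, v - y⟫

/-- `q` is a slack variable for the pair `(u, y)`: primal-dual system. -/
def IsSlack (A : Euc n →ₗ[ℝ] Euc n) (K : Euc n →ₗ[ℝ] Rows m d) (u y : Euc n)
    (q : Rows m d) : Prop :=
  A y + (LinearMap.adjoint K) q = u ∧ (∀ j, ⟪q j, K y j⟫ = ‖K y j‖) ∧ ∀ j, ‖q j‖ ≤ 1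

/-- The complementarity relations alone. -/
def ComplRel (K : Euc n →ₗ[ℝ] Rows m d) (y : Euc n) (q : Rows m d) : Prop :=
  (∀ j, ⟪q j, K y j⟫ = ‖K y j‖) ∧ ∀ j, ‖q j‖ ≤ 1

/-- The cone `𝒦(y)` defined via a slack variable `q`. -/
def KconeQ (K : Euc n →ₗ[ℝ] Rows m d) (y : Euc n) (q : Rows m d) : Set (Euc n) :=
  {v | (∀ j, ‖q j‖ < 1 → K v j = 0) ∧
       ∀ j, ‖q j‖ = 1 → K y j = 0 → ⟪q j, K v j⟫ = ‖K v j‖}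

/-- `∑_{j∈ℐ(y)} ⟨(𝕂y)_j/|(𝕂y)_j|, (𝕂v)_j⟩ + ∑_{j∈𝒜(y)} |(𝕂v)_j|`. -/
def dirRHS (K : Euc n →ₗ[ℝ] Rows m d) (y v : Euc n) : ℝ :=
  ∑ j, if K y j ≠ 0 then ⟪(‖K y j‖)⁻¹ • K y j, K v j⟫ else ‖K v j‖

/-- The cone `𝒦(y)` in its slack-variable-free form. -/
def Kcone (A : Euc n →ₗ[ℝ] Euc n) (K : Euc n →ₗ[ℝ] Rows m d) (u y : Euc n) : Set (Euc n) :=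
  {v | ⟪u - A y, v⟫ ≥ dirRHS K y v}

/-- Second order term `∑_{j∈ℐ(y)} ⟨(𝕂η)_j/|(𝕂y)_j| − ⟨(𝕂y)_j,(𝕂η)_j⟩(𝕂y)_j/|(𝕂y)_j|³, (𝕂w)_j⟩`. -/
def secondForm (K : Euc n →ₗ[ℝ] Rows m d) (y η w : Euc n) : ℝ :=
  ∑ j, if K y j ≠ 0 then
      ⟪(‖K y j‖)⁻¹ • K η j - ((⟪K y j, K η j⟫) / ‖K y j‖ ^ 3) • K y j, K w j⟫
    else 0

/-- The quadratic functional `f_y` whose minimizer over `𝒦(y)` is the directional derivative. -/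
def fy (A : Euc n →ₗ[ℝ] Euc n) (K : Euc n →ₗ[ℝ] Rows m d) (y h η : Euc n) : ℝ :=
  (1 / 2) * ⟪η, A η⟫ - ⟪h, η⟫ +
    (1 / 2) * ∑ j, if K y j ≠ 0 then
        ‖K η j‖ ^ 2 / ‖K y j‖ - (⟪K y j, K η j⟫) ^ 2 / ‖K y j‖ ^ 3
      else 0

/-- `η` solves the VI of the first kind characterizing the directional derivative. -/
def VI1Sol (A : Euc n →ₗ[ℝ] Euc n) (K : Euc n →ₗ[ℝ] Rows m d) (u y h η : Euc n) : Prop :=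
  η ∈ Kcone A K u y ∧ ∀ v ∈ Kcone A K u y,
    ⟪A η, v - η⟫ + secondForm K y η (v - η) ≥ ⟪h, v - η⟫

/-- Bouligand subdifferential of a map `S` at `u`. -/
def BSubdiff (S : Euc n → Euc n) (u : Euc n) : Set (Euc n →L[ℝ] Euc n) :=
  {G | ∃ (uk : ℕ → Euc n) (Gk : ℕ → (Euc n →L[ℝ] Euc n)),
    (∀ k, HasFDerivAt S (Gk k) (uk k)) ∧
    Filter.Tendsto uk Filter.atTop (nhds u) ∧
    Filter.Tendsto Gk Filter.atTop (nhds G)}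

/-- Biactive set associated with `y` and a slack variable `q`. -/
def Biactive (K : Euc n →ₗ[ℝ] Rows m d) (y : Euc n) (q : Rows m d) : Set (Fin m) :=
  {j | K y j = 0 ∧ ‖q j‖ = 1}

/-- The subspace `V` associated with a splitting `ℬ₀ ∪ ℬ₁` of the biactive set. -/
def Vsub (K : Euc n →ₗ[ℝ] Rows m d) (q : Rows m d) (B0 B1 : Set (Fin m)) : Set (Euc n) :=
  {v | (∀ j, ‖q j‖ < 1 → K v j = 0) ∧ (∀ j ∈ B0, K v j = 0) ∧
       ∀ j ∈ B1, ∃ c : ℝ, K v j = c • q j}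

/-- primal-dual characterization of solutions of VI(u). -/
theorem stmt2 {n m d : ℕ} (A : Euc n →ₗ[ℝ] Euc n)
    (hAsymm : ∀ x z : Euc n, ⟪A x, z⟫ = ⟪x, A z⟫)
    (hApos : ∀ x : Euc n, x ≠ 0 → 0 < ⟪x, A x⟫)
    (K : Euc n →ₗ[ℝ] Rows m d) (hK : Function.Injective K) (u y : Euc n) :
    IsVISol A K u y ↔
      ∃ q : Rows m d, A y + (LinearMap.adjoint K) q = u ∧
        (∀ j, ⟪q j, K y j⟫ = ‖K y j‖) ∧ ∀ j, ‖q j‖ ≤ 1 := by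
  constructor
  · intro hVI
    set w : Euc n := u - A y with hw
    -- key inequality
    have key : ∀ z : Euc n, ⟪w, z⟫ ≤ ∑ j, ‖K z j‖ := by
      intro z
      have h := hVI (y + z)
      rw [add_sub_cancel_left] at h
      have hle : ∑ j, (‖K (y + z) j‖ - ‖K y j‖) ≤ ∑ j, ‖K z j‖ := by
        apply Finset.sum_le_sum
        intro j _
        have hKj : K (y + z) j = K y j + K z j := by simp [map_add]
        rw [hKj]
        linarith [norm_add_le (K y j) (K z j)]
      rw [hw, inner_sub_left]
      linarith
    -- equality at y
    have heq : ⟪w, y⟫ = ∑ j, ‖K y j‖ := by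
      have h0 := hVI 0
      simp only [map_zero, zero_sub, inner_neg_right] at h0
      have hzero : ∑ j, (‖(0 : Rows m d) j‖ - ‖K y j‖) = -∑ j, ‖K y j‖ := by
        simp [Finset.sum_neg_distrib]
      rw [hzero] at h0
      have := key y
      rw [hw, inner_sub_left] at this ⊢
      linarith
    -- Hahn-Banach extension
    set N : Rows m d → ℝ := fun B => ∑ j, ‖B j‖ with hN
    let e := LinearEquiv.ofInjective K hK
    let ℓ : (LinearMap.range K) →ₗ[ℝ] ℝ :=
      ((innerSL ℝ w).toLinearMap).comp e.symm.toLinearMap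
    have hKz : ∀ x : LinearMap.range K, K (e.symm x) = (x : Rows m d) := by
      intro x
      have h1 : ((e (e.symm x) : LinearMap.range K) : Rows m d) = (x : Rows m d) := by
        rw [e.apply_symm_apply]
      simpa [e, LinearEquiv.ofInjective_apply] using h1
    obtain ⟨g, hg1, hg2⟩ :=
      exists_extension_of_le_sublinear ⟨LinearMap.range K, ℓ⟩ N
        (by
          intro c hc B
          simp [hN, norm_smul, abs_of_pos hc, Finset.mul_sum])
        (by
          intro B C
          rw [hN, ← Finset.sum_add_distrib]
          exact Finset.sum_le_sum fun j _ => norm_add_le _ _)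
        (by
          intro x
          have hx : (⟨LinearMap.range K, ℓ⟩ : Rows m d →ₗ.[ℝ] ℝ) x = ⟪w, e.symm x⟫ := rfl
          rw [hx]
          have := key (e.symm x)
          rw [hKz x] at this
          exact this)
    haveI : ContinuousSMul ℝ (Rows m d) := IsBoundedSMul.continuousSMul
    set q : Rows m d :=
      (InnerProductSpace.toDual ℝ (Rows m d)).symm (LinearMap.toContinuousLinearMap g) with hqdef
    have hq : ∀ B : Rows m d, ⟪q, B⟫ = g B := fun B => InnerProductSpace.toDual_symm_apply
    have hgK : ∀ v : Euc n, g (K v) = ⟪w, v⟫ := by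
      intro v
      have hmem : K v ∈ LinearMap.range K := ⟨v, rfl⟩
      have h1 := hg1 ⟨K v, hmem⟩
      have h2 : (⟨LinearMap.range K, ℓ⟩ : Rows m d →ₗ.[ℝ] ℝ) ⟨K v, hmem⟩
          = ⟪w, e.symm ⟨K v, hmem⟩⟫ := rfl
      have hev : e v = ⟨K v, hmem⟩ :=
        Subtype.ext (by simp [e, LinearEquiv.ofInjective_apply])
      have h3 : e.symm ⟨K v, hmem⟩ = v := by rw [← hev, e.symm_apply_apply]
      rw [h1, h2, h3]
    have hadj : (LinearMap.adjoint K) q = w := by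
      apply ext_inner_right ℝ
      intro v
      rw [LinearMap.adjoint_inner_left, hq, hgK]
    have hnorm : ∀ j, ‖q j‖ ≤ 1 := by
      intro j
      by_cases h0 : q j = 0
      · simp [h0]
      · have hB := hg2 (WithLp.toLp 2 (Pi.single j (q j)))
        have hinner : ⟪q, (WithLp.toLp 2 (Pi.single j (q j)) : Rows m d)⟫ = ‖q j‖ ^ 2 := by
          rw [PiLp.inner_apply]
          rw [Finset.sum_eq_single j]
          · simp [real_inner_self_eq_norm_sq]
          · intro b _ hb
            simp [Pi.single_eq_of_ne hb]
          · simp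
        have hNval : ∑ j', ‖(WithLp.toLp 2 (Pi.single j (q j)) : Rows m d) j'‖ = ‖q j‖ := by
          rw [Finset.sum_eq_single j]
          · rw [PiLp.toLp_apply, Pi.single_eq_same]
          · intro b _ hb
            rw [PiLp.toLp_apply, Pi.single_eq_of_ne hb, norm_zero]
          · simp
        have := hq (WithLp.toLp 2 (Pi.single j (q j)))
        rw [hinner] at this
        simp only [hN] at hB
        rw [hNval] at hB
        nlinarith [norm_nonneg (q j), (norm_pos_iff.mpr h0 : (0:ℝ) < ‖q j‖)]
    refine ⟨q, ?_, ?_, hnorm⟩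
    · rw [hadj, hw]; abel
    · have hsum : ∑ j, ⟪q j, K y j⟫ = ∑ j, ‖K y j‖ := by
        have h1 : ⟪(LinearMap.adjoint K) q, y⟫ = ⟪q, K y⟫ :=
          LinearMap.adjoint_inner_left K y q
        rw [hadj, heq, PiLp.inner_apply] at h1
        exact h1.symm
      have hterm : ∀ j, ⟪q j, K y j⟫ ≤ ‖K y j‖ := by
        intro j
        calc ⟪q j, K y j⟫ ≤ ‖q j‖ * ‖K y j‖ := real_inner_le_norm _ _
          _ ≤ 1 * ‖K y j‖ := by
              exact mul_le_mul_of_nonneg_right (hnorm j) (norm_nonneg _)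
          _ = ‖K y j‖ := one_mul _
      have hz : ∑ j, (‖K y j‖ - ⟪q j, K y j⟫) = 0 := by
        rw [Finset.sum_sub_distrib, hsum, sub_self]
      intro j
      have := (Finset.sum_eq_zero_iff_of_nonneg
        (fun i _ => by linarith [hterm i] : ∀ i ∈ Finset.univ,
          (0:ℝ) ≤ ‖K y i‖ - ⟪q i, K y i⟫)).mp hz j (Finset.mem_univ j)
      linarith
  · rintro ⟨q, hsum, hcompl, hnorm⟩ v
    have hu : ⟪u, v - y⟫ = ⟪A y, v - y⟫ + ⟪q, K (v - y)⟫ := by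
      rw [← hsum, inner_add_left, LinearMap.adjoint_inner_left]
    rw [hu]
    have hqK : ⟪q, K (v - y)⟫ = ∑ j, (⟪q j, K v j⟫ - ⟪q j, K y j⟫) := by
      rw [PiLp.inner_apply]
      apply Finset.sum_congr rfl
      intro j _
      have : K (v - y) j = K v j - K y j := by simp [map_sub]
      rw [this, inner_sub_right]
    rw [hqK]
    have : ∑ j, (⟪q j, K v j⟫ - ⟪q j, K y j⟫) ≤ ∑ j, (‖K v j‖ - ‖K y j‖) := by
      apply Finset.sum_le_sum
      intro j _
      rw [hcompl j]
      have h1 : ⟪q j, K v j⟫ ≤ ‖K v j‖ := by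
        calc ⟪q j, K v j⟫ ≤ ‖q j‖ * ‖K v j‖ := real_inner_le_norm _ _
          _ ≤ 1 * ‖K v j‖ := mul_le_mul_of_nonneg_right (hnorm j) (norm_nonneg _)
          _ = ‖K v j‖ := one_mul _
      linarith
    linarith
end
end

section
/- Suppose y ∈ ℝ^n and q ∈ ℝ^{m×d} satisfy ⟨q_j, (𝕂y)_j⟩ = |(𝕂y)_j| and |q_j| ≤ 1 for all j = 1,…,m. Then the set {v ∈ ℝ^n : (𝕂v)_j = 0 whenever |q_j| < 1, and ⟨q_j, (𝕂v)_j⟩ = |(𝕂v)_j| whenever |q_j| = 1 and (𝕂y)_j = 0} coincides with the set {v ∈ ℝ^n : ⟨𝕂*q, v⟩ ≥ ∑_{j∈ℐ(y)} ⟨(𝕂y)_j/|(𝕂y)_j|, (𝕂v)_j⟩ + ∑_{j∈𝒜(y)} |(𝕂v)_j|}. -/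
open scoped RealInnerProductSpace BigOperators Classical Topology

noncomputable section

variable {n m d : ℕ}

lemma slack_eq_normalized {d : ℕ} (a x : EuclideanSpace ℝ (Fin d))
    (h1 : ⟪a, x⟫ = ‖x‖) (h2 : ‖a‖ ≤ 1) (hx : x ≠ 0) : a = ‖x‖⁻¹ • x := by
  have hxn : (0:ℝ) < ‖x‖ := norm_pos_iff.mpr hx
  have hb : ⟪a, ‖x‖⁻¹ • x⟫ = 1 := by
    rw [real_inner_smul_right, h1]
    field_simp
  have hbn : ‖(‖x‖⁻¹ • x)‖ = 1 := by
    rw [norm_smul]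
    simp [abs_of_pos (inv_pos.mpr hxn), inv_mul_cancel₀ hxn.ne']
  have hsq : ‖a - ‖x‖⁻¹ • x‖ ^ 2 = ‖a‖ ^ 2 - 1 := by
    rw [norm_sub_sq_real, hb, hbn]; ring
  have h1' : ‖a‖ ^ 2 ≤ 1 := by
    calc ‖a‖ ^ 2 ≤ 1 ^ 2 := by
          exact pow_le_pow_left₀ (norm_nonneg a) h2 2
      _ = 1 := one_pow 2
  have : ‖a - ‖x‖⁻¹ • x‖ ^ 2 ≤ 0 := by rw [hsq]; linarith
  have := le_antisymm this (by positivity)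
  have : ‖a - ‖x‖⁻¹ • x‖ = 0 := by
    nlinarith [norm_nonneg (a - ‖x‖⁻¹ • x)]
  have := norm_eq_zero.mp this
  exact sub_eq_zero.mp this

/-- equivalent description of the cone `𝒦(y)` under the complementarity relations. -/
theorem stmt5 {n m d : ℕ} (K : Euc n →ₗ[ℝ] Rows m d) (hK : Function.Injective K)
    (y : Euc n) (q : Rows m d) (hq : ComplRel K y q) :
    KconeQ K y q = {v : Euc n | ⟪(LinearMap.adjoint K) q, v⟫ ≥ dirRHS K y v} := by
  obtain ⟨hq1, hq2⟩ := hq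
  ext v
  have hadj : ⟪(LinearMap.adjoint K) q, v⟫ = ∑ j, ⟪q j, K v j⟫ := by
    rw [LinearMap.adjoint_inner_left]
    exact PiLp.inner_apply q (K v)
  set T : Fin m → ℝ := fun j =>
    (if K y j ≠ 0 then ⟪(‖K y j‖)⁻¹ • K y j, K v j⟫ else ‖K v j‖) - ⟪q j, K v j⟫ with hT
  have hineq : (⟪(LinearMap.adjoint K) q, v⟫ ≥ dirRHS K y v) ↔ ∑ j, T j ≤ 0 := by
    rw [hadj, dirRHS]
    rw [Finset.sum_sub_distrib]
    constructor <;> intro h <;> linarith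
  have hTnn : ∀ j, 0 ≤ T j := by
    intro j
    simp only [hT]
    by_cases hy : K y j = 0
    · simp only [hy, ne_eq, not_true_eq_false, if_false]
      have := real_inner_le_norm (q j) (K v j)
      have h2 := hq2 j
      nlinarith [norm_nonneg (K v j)]
    · have : q j = ‖K y j‖⁻¹ • K y j :=
        slack_eq_normalized (q j) (K y j) (hq1 j) (hq2 j) hy
      simp [hy, this]
  have hTzero : ∀ j, K y j = 0 → T j = ‖K v j‖ - ⟪q j, K v j⟫ := by
    intro j hy; simp [hT, hy]
  constructor
  · rintro ⟨h1, h2⟩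
    rw [Set.mem_setOf_eq, hineq]
    apply le_of_eq
    apply Finset.sum_eq_zero
    intro j _
    by_cases hy : K y j = 0
    · rw [hTzero j hy]
      rcases lt_or_eq_of_le (hq2 j) with hlt | heq
      · rw [h1 j hlt]; simp
      · rw [h2 j heq hy]; ring
    · have : q j = ‖K y j‖⁻¹ • K y j :=
        slack_eq_normalized (q j) (K y j) (hq1 j) (hq2 j) hy
      simp [hT, hy, this]
  · intro h
    rw [Set.mem_setOf_eq, hineq] at h
    have hsum : ∑ j, T j = 0 :=
      le_antisymm h (Finset.sum_nonneg fun j _ => hTnn j)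
    have hall : ∀ j ∈ Finset.univ, T j = 0 :=
      (Finset.sum_eq_zero_iff_of_nonneg fun j _ => hTnn j).mp hsum
    constructor
    · intro j hlt
      have hy : K y j = 0 := by
        by_contra hy
        have : q j = ‖K y j‖⁻¹ • K y j :=
          slack_eq_normalized (q j) (K y j) (hq1 j) (hq2 j) hy
        have hn : ‖q j‖ = 1 := by
          rw [this, norm_smul]
          have : (0:ℝ) < ‖K y j‖ := norm_pos_iff.mpr hy
          simp [abs_of_pos (inv_pos.mpr this), inv_mul_cancel₀ this.ne']
        linarith
      have := hall j (Finset.mem_univ j)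
      rw [hTzero j hy, sub_eq_zero] at this
      by_contra hv
      have hcs : ⟪q j, K v j⟫ ≤ ‖q j‖ * ‖K v j‖ := real_inner_le_norm _ _
      have hvp : (0:ℝ) < ‖K v j‖ := norm_pos_iff.mpr hv
      nlinarith
    · intro j _ hy
      have := hall j (Finset.mem_univ j)
      rw [hTzero j hy, sub_eq_zero] at this
      exact this.symm
end
end

section
/- Let y ∈ ℝ^n and let q¹, q² ∈ ℝ^{m×d} be two slack variables for the same pair (u, y), i.e. Ay + 𝕂*qⁱ = u, ⟨qⁱ_j, (𝕂y)_j⟩ = |(𝕂y)_j| and |qⁱ_j| ≤ 1 for all j and i = 1, 2. Then the two cones 𝒦ᵢ := {v ∈ ℝ^n : (𝕂v)_j = 0 whenever |qⁱ_j| < 1, and ⟨qⁱ_j, (𝕂v)_j⟩ = |(𝕂v)_j| whenever |qⁱ_j| = 1 and (𝕂y)_j = 0}, i = 1, 2, coincide. -/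
open scoped RealInnerProductSpace BigOperators Classical Topology

noncomputable section

variable {n m d : ℕ}

lemma slack_row_eq {n m d : ℕ} (K : Euc n →ₗ[ℝ] Rows m d) (y : Euc n)
    (q : Rows m d) (hc : ComplRel K y q) (j : Fin m) (hj : K y j ≠ 0) :
    q j = (‖K y j‖)⁻¹ • K y j := by
  obtain ⟨h1, h2⟩ := hc
  have hpos : (0:ℝ) < ‖K y j‖ := norm_pos_iff.mpr hj
  have hle := real_inner_le_norm (q j) (K y j)
  have hqn : ‖q j‖ = 1 := by
    have h' := hle
    rw [h1 j] at h'
    nlinarith [h2 j]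
  have heq : ⟪q j, K y j⟫ = ‖q j‖ * ‖K y j‖ := by rw [hqn, one_mul]; exact h1 j
  have h2' := inner_eq_norm_mul_iff_real.mp heq
  rw [hqn, one_smul] at h2'
  calc q j = (‖K y j‖)⁻¹ • (‖K y j‖ • q j) := by
        rw [smul_smul, inv_mul_cancel₀ (ne_of_gt hpos), one_smul]
    _ = (‖K y j‖)⁻¹ • K y j := by rw [h2']

lemma row_norm_one {n m d : ℕ} (K : Euc n →ₗ[ℝ] Rows m d) (y : Euc n)
    (q : Rows m d) (hc : ComplRel K y q) (j : Fin m) (hj : K y j ≠ 0) :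
    ‖q j‖ = 1 := by
  rw [slack_row_eq K y q hc j hj, norm_smul, norm_inv, norm_norm,
    inv_mul_cancel₀ (norm_ne_zero_iff.mpr hj)]

lemma cone_mono {n m d : ℕ} (K : Euc n →ₗ[ℝ] Rows m d) (y : Euc n)
    (q₁ q₂ : Rows m d) (hc₁ : ComplRel K y q₁) (hc₂ : ComplRel K y q₂)
    (hadj : (LinearMap.adjoint K) q₁ = (LinearMap.adjoint K) q₂) :
    KconeQ K y q₁ ⊆ KconeQ K y q₂ := by
  intro v hv
  obtain ⟨hv1, hv2⟩ := hv
  have key : ∀ j, K y j = 0 → ⟪q₁ j, K v j⟫ = ‖K v j‖ := by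
    intro j hj
    rcases lt_or_eq_of_le (hc₁.2 j) with h | h
    · rw [hv1 j h]; simp
    · exact hv2 j h hj
  have hle : ∀ j ∈ Finset.univ, ⟪q₂ j, K v j⟫ ≤ ⟪q₁ j, K v j⟫ := by
    intro j _
    by_cases hj : K y j = 0
    · rw [key j hj]
      calc ⟪q₂ j, K v j⟫ ≤ ‖q₂ j‖ * ‖K v j‖ := real_inner_le_norm _ _
        _ ≤ 1 * ‖K v j‖ := mul_le_mul_of_nonneg_right (hc₂.2 j) (norm_nonneg _)
        _ = ‖K v j‖ := one_mul _
    · rw [slack_row_eq K y q₁ hc₁ j hj, slack_row_eq K y q₂ hc₂ j hj]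
  have hsum : ∑ j, ⟪q₂ j, K v j⟫ = ∑ j, ⟪q₁ j, K v j⟫ := by
    have e : ∀ q : Rows m d, ∑ j, ⟪q j, K v j⟫ = ⟪(LinearMap.adjoint K) q, v⟫ := by
      intro q
      rw [LinearMap.adjoint_inner_left]
      exact (PiLp.inner_apply _ _).symm
    rw [e q₁, e q₂, hadj]
  have hterm : ∀ j, ⟪q₂ j, K v j⟫ = ⟪q₁ j, K v j⟫ := by
    intro j
    exact (Finset.sum_eq_sum_iff_of_le hle).mp hsum j (Finset.mem_univ j)
  have key₂ : ∀ j, K y j = 0 → ⟪q₂ j, K v j⟫ = ‖K v j‖ := fun j hj =>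
    (hterm j).trans (key j hj)
  refine ⟨fun j hq => ?_, fun j _ hj => key₂ j hj⟩
  · have hj : K y j = 0 := by
      by_contra h
      exact absurd (row_norm_one K y q₂ hc₂ j h) (ne_of_lt hq)
    have h1 := key₂ j hj
    have h2 : ⟪q₂ j, K v j⟫ ≤ ‖q₂ j‖ * ‖K v j‖ := real_inner_le_norm _ _
    have h3 : ‖K v j‖ = 0 := by nlinarith [norm_nonneg (K v j)]
    exact norm_eq_zero.mp h3

/-- the cone `𝒦(y)` does not depend on the choice of slack variable. -/
theorem stmt6 {n m d : ℕ} (A : Euc n →ₗ[ℝ] Euc n)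
    (hAsymm : ∀ x z : Euc n, ⟪A x, z⟫ = ⟪x, A z⟫)
    (hApos : ∀ x : Euc n, x ≠ 0 → 0 < ⟪x, A x⟫)
    (K : Euc n →ₗ[ℝ] Rows m d) (hK : Function.Injective K) (u y : Euc n)
    (q₁ q₂ : Rows m d) (hq₁ : IsSlack A K u y q₁) (hq₂ : IsSlack A K u y q₂) :
    KconeQ K y q₁ = KconeQ K y q₂ := by
  have hadj : (LinearMap.adjoint K) q₁ = (LinearMap.adjoint K) q₂ :=
    add_left_cancel (hq₁.1.trans hq₂.1.symm)
  exact Set.Subset.antisymm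
    (cone_mono K y q₁ q₂ ⟨hq₁.2.1, hq₁.2.2⟩ ⟨hq₂.2.1, hq₂.2.2⟩ hadj)
    (cone_mono K y q₂ q₁ ⟨hq₂.2.1, hq₂.2.2⟩ ⟨hq₁.2.1, hq₁.2.2⟩ hadj.symm)
end
end

section
/- Let (y, q) satisfy ⟨q_j, (𝕂y)_j⟩ = |(𝕂y)_j| and |q_j| ≤ 1 for all j, and let (y′, q′) satisfy the same relations, with ℐ(y) ⊆ ℐ(y′) and q′_j = (𝕂y′)_j/|(𝕂y′)_j| for all j ∈ ℐ(y′). Then for every v in the cone 𝒦(y) := {v ∈ ℝ^n : ⟨𝕂*q, v⟩ ≥ ∑_{j∈ℐ(y)} ⟨(𝕂y)_j/|(𝕂y)_j|, (𝕂v)_j⟩ + ∑_{j∈𝒜(y)} |(𝕂v)_j|} one has ⟨𝕂*(q′ − q), v⟩ ≤ ∑_{j∈ℐ(y)} ⟨(𝕂y′)_j/|(𝕂y′)_j| − (𝕂y)_j/|(𝕂y)_j|, (𝕂v)_j⟩. -/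
open scoped RealInnerProductSpace BigOperators Classical Topology

noncomputable section

variable {n m d : ℕ}

/-- the key sign condition for the difference of slack variables on `𝒦(y)`. -/
theorem stmt8 {n m d : ℕ} (K : Euc n →ₗ[ℝ] Rows m d) (hK : Function.Injective K)
    (y y' : Euc n) (q q' : Rows m d) (hq : ComplRel K y q) (hq' : ComplRel K y' q')
    (hI : ∀ j : Fin m, K y j ≠ 0 → K y' j ≠ 0)
    (hq'I : ∀ j : Fin m, K y' j ≠ 0 → q' j = (‖K y' j‖)⁻¹ • K y' j) :
    ∀ v : Euc n, ⟪(LinearMap.adjoint K) q, v⟫ ≥ dirRHS K y v →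
      ⟪(LinearMap.adjoint K) (q' - q), v⟫ ≤
        ∑ j, if K y j ≠ 0 then
            ⟪(‖K y' j‖)⁻¹ • K y' j - (‖K y j‖)⁻¹ • K y j, K v j⟫
          else 0 := by
  intro v hv
  have hadj : ∀ w : Rows m d, ⟪(LinearMap.adjoint K) w, v⟫ = ∑ j, ⟪w j, K v j⟫ := by
    intro w
    rw [LinearMap.adjoint_inner_left]
    exact PiLp.inner_apply w (K v)
  have key : ∀ j : Fin m,
      ⟪q' j, K v j⟫ - (if K y j ≠ 0 then ⟪(‖K y j‖)⁻¹ • K y j, K v j⟫ else ‖K v j‖) ≤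
      (if K y j ≠ 0 then ⟪(‖K y' j‖)⁻¹ • K y' j - (‖K y j‖)⁻¹ • K y j, K v j⟫ else 0) := by
    intro j
    by_cases h : K y j ≠ 0
    · rw [if_pos h, if_pos h, hq'I j (hI j h), inner_sub_left]
    · simp only [h, if_false]
      have h1 : ⟪q' j, K v j⟫ ≤ ‖q' j‖ * ‖K v j‖ := real_inner_le_norm _ _
      have h2 : ‖q' j‖ * ‖K v j‖ ≤ ‖K v j‖ :=
        mul_le_of_le_one_left (norm_nonneg _) (hq'.2 j)
      linarith
  have e1 : ⟪(LinearMap.adjoint K) (q' - q), v⟫ =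
      (∑ j, ⟪q' j, K v j⟫) - ⟪(LinearMap.adjoint K) q, v⟫ := by
    rw [hadj, hadj, ← Finset.sum_sub_distrib]
    congr 1; ext j
    simp [inner_sub_left]
  rw [e1]
  have h3 : (∑ j, ⟪q' j, K v j⟫) - ⟪(LinearMap.adjoint K) q, v⟫ ≤
      (∑ j, ⟪q' j, K v j⟫) - dirRHS K y v := by linarith
  refine h3.trans ?_
  unfold dirRHS
  rw [← Finset.sum_sub_distrib]
  exact Finset.sum_le_sum (fun j _ => key j)
end
end

section
/- Let u ∈ ℝ^n, let y be the unique solution of VI(u), and let h ∈ ℝ^n. Then the variational inequality of the first kind: find η ∈ 𝒦(y) with ⟨Aη, v−η⟩ + ∑_{j∈ℐ(y)} ⟨(𝕂η)_j/|(𝕂y)_j| − ⟨(𝕂y)_j, (𝕂η)_j⟩ (𝕂y)_j/|(𝕂y)_j|³, (𝕂v)_j − (𝕂η)_j⟩ ≥ ⟨h, v−η⟩ for all v ∈ 𝒦(y), has exactly one solution η, and η is the unique minimizer over 𝒦(y) of f_y(η) := (1/2)⟨η, Aη⟩ − ⟨h, η⟩ + (1/2)∑_{j∈ℐ(y)}(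 |(𝕂η)_j|²/|(𝕂y)_j| − ⟨(𝕂y)_j, (𝕂η)_j⟩²/|(𝕂y)_j|³ ). -/
open scoped RealInnerProductSpace BigOperators Classical Topology

noncomputable section

variable {n m d : ℕ}

lemma secondForm_eq (K : Euc n →ₗ[ℝ] Rows m d) (y x w : Euc n) :
    secondForm K y x w = ∑ j, if K y j ≠ 0 then
      ⟪K x j, K w j⟫ / ‖K y j‖ - ⟪K y j, K x j⟫ * ⟪K y j, K w j⟫ / ‖K y j‖ ^ 3 else 0 := by
  unfold secondForm
  refine Finset.sum_congr rfl fun j _ => ?_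
  split_ifs with hj
  · rw [inner_sub_left, real_inner_smul_left, real_inner_smul_left]
    ring
  · rfl

lemma secondForm_symm (K : Euc n →ₗ[ℝ] Rows m d) (y x w : Euc n) :
    secondForm K y x w = secondForm K y w x := by
  rw [secondForm_eq, secondForm_eq]
  refine Finset.sum_congr rfl fun j _ => ?_
  split_ifs with hj
  · rw [real_inner_comm (K x j) (K w j)]; ring
  · rfl

lemma secondForm_self_nonneg (K : Euc n →ₗ[ℝ] Rows m d) (y x : Euc n) :
    0 ≤ secondForm K y x x := by
  rw [secondForm_eq]
  refine Finset.sum_nonneg fun j _ => ?_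
  split_ifs with hj
  · have ha : (0:ℝ) < ‖K y j‖ := norm_pos_iff.2 hj
    have hcs : |⟪K y j, K x j⟫| ≤ ‖K y j‖ * ‖K x j‖ := abs_real_inner_le_norm _ _
    have hcs2 : ⟪K y j, K x j⟫ * ⟪K y j, K x j⟫ ≤ (‖K y j‖ * ‖K x j‖) * (‖K y j‖ * ‖K x j‖) := by
      calc ⟪K y j, K x j⟫ * ⟪K y j, K x j⟫ = |⟪K y j, K x j⟫| * |⟪K y j, K x j⟫| := by
            rw [← abs_mul, abs_mul_self]
        _ ≤ _ := mul_le_mul hcs hcs (abs_nonneg _) (by positivity)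
    rw [real_inner_self_eq_norm_sq, sub_nonneg, div_le_div_iff₀ (by positivity) ha]
    nlinarith [sq_nonneg (‖K x j‖)]
  · exact le_refl 0

lemma secondForm_smul_right (K : Euc n →ₗ[ℝ] Rows m d) (y x w : Euc n) (t : ℝ) :
    secondForm K y x (t • w) = t * secondForm K y x w := by
  rw [secondForm_eq, secondForm_eq, Finset.mul_sum]
  refine Finset.sum_congr rfl fun j _ => ?_
  split_ifs with hj
  · have : K (t • w) j = t • K w j := by rw [map_smul]; rfl
    rw [this, real_inner_smul_right, real_inner_smul_right]; ring
  · ring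

lemma secondForm_add_right (K : Euc n →ₗ[ℝ] Rows m d) (y x w₁ w₂ : Euc n) :
    secondForm K y x (w₁ + w₂) = secondForm K y x w₁ + secondForm K y x w₂ := by
  rw [secondForm_eq, secondForm_eq, secondForm_eq, ← Finset.sum_add_distrib]
  refine Finset.sum_congr rfl fun j _ => ?_
  split_ifs with hj
  · have : K (w₁ + w₂) j = K w₁ j + K w₂ j := by rw [map_add]; rfl
    rw [this, inner_add_right, inner_add_right]; ring
  · ring

lemma secondForm_smul_left (K : Euc n →ₗ[ℝ] Rows m d) (y x w : Euc n) (t : ℝ) :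
    secondForm K y (t • x) w = t * secondForm K y x w := by
  rw [secondForm_symm, secondForm_smul_right, secondForm_symm]

lemma secondForm_add_left (K : Euc n →ₗ[ℝ] Rows m d) (y x₁ x₂ w : Euc n) :
    secondForm K y (x₁ + x₂) w = secondForm K y x₁ w + secondForm K y x₂ w := by
  rw [secondForm_symm, secondForm_add_right, secondForm_symm, secondForm_symm K y w x₂]

lemma secondForm_sub_right (K : Euc n →ₗ[ℝ] Rows m d) (y x w₁ w₂ : Euc n) :
    secondForm K y x (w₁ - w₂) = secondForm K y x w₁ - secondForm K y x w₂ := by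
  have := secondForm_add_right K y x (w₁ - w₂) w₂
  simp only [sub_add_cancel] at this
  linarith

lemma secondForm_cont (K : Euc n →ₗ[ℝ] Rows m d) (y : Euc n) :
    Continuous fun x : Euc n => secondForm K y x x := by
  simp only [secondForm_eq]
  refine continuous_finset_sum _ fun j _ => ?_
  split_ifs with hj
  · have hKj : Continuous fun v : Euc n => K v j :=
      (PiLp.continuous_apply 2 _ j).comp (by have : ContinuousSMul ℝ (Rows m d) := inferInstance; exact K.continuous_of_finiteDimensional)
    exact ((hKj.inner hKj).div_const _).sub
      (((continuous_const.inner hKj).mul (continuous_const.inner hKj)).div_const _)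
  · exact continuous_const

lemma fy_eq (A : Euc n →ₗ[ℝ] Euc n) (K : Euc n →ₗ[ℝ] Rows m d) (y h x : Euc n) :
    fy A K y h x = (1/2) * (⟪x, A x⟫ + secondForm K y x x) - ⟪h, x⟫ := by
  unfold fy
  rw [secondForm_eq]
  have : ∀ j : Fin m, (if K y j ≠ 0 then
        ‖K x j‖ ^ 2 / ‖K y j‖ - (⟪K y j, K x j⟫) ^ 2 / ‖K y j‖ ^ 3 else 0)
      = (if K y j ≠ 0 then
        ⟪K x j, K x j⟫ / ‖K y j‖ - ⟪K y j, K x j⟫ * ⟪K y j, K x j⟫ / ‖K y j‖ ^ 3 else 0) := by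
    intro j; split_ifs with hj
    · rw [real_inner_self_eq_norm_sq]; ring
    · rfl
  simp only [this]
  ring

lemma fy_cont (A : Euc n →ₗ[ℝ] Euc n) (K : Euc n →ₗ[ℝ] Rows m d) (y h : Euc n) :
    Continuous (fy A K y h) := by
  have he : fy A K y h = fun x => (1/2) * (⟪x, A x⟫ + secondForm K y x x) - ⟪h, x⟫ :=
    funext (fy_eq A K y h)
  rw [he]
  have hA : Continuous fun x : Euc n => A x := A.continuous_of_finiteDimensional
  exact ((continuous_const.mul ((continuous_id.inner hA).add (secondForm_cont K y))).sub
    (continuous_const.inner continuous_id))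

lemma fy_zero (A : Euc n →ₗ[ℝ] Euc n) (K : Euc n →ₗ[ℝ] Rows m d) (y h : Euc n) :
    fy A K y h 0 = 0 := by
  rw [fy_eq]
  simp [secondForm_eq]

lemma Kcone_zero (A : Euc n →ₗ[ℝ] Euc n) (K : Euc n →ₗ[ℝ] Rows m d) (u y : Euc n) :
    (0 : Euc n) ∈ Kcone A K u y := by
  simp only [Kcone, Set.mem_setOf_eq, inner_zero_right, dirRHS]
  have : ∀ j : Fin m, (if K y j ≠ 0 then ⟪(‖K y j‖)⁻¹ • K y j, K (0:Euc n) j⟫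
      else ‖K (0:Euc n) j‖) = 0 := by
    intro j
    have h0 : K (0:Euc n) j = 0 := by rw [map_zero]; rfl
    split_ifs <;> simp [h0]
  simp [this]

lemma Kcone_closed (A : Euc n →ₗ[ℝ] Euc n) (K : Euc n →ₗ[ℝ] Rows m d) (u y : Euc n) :
    IsClosed (Kcone A K u y) := by
  have h1 : Continuous fun v : Euc n => dirRHS K y v := by
    unfold dirRHS
    refine continuous_finset_sum _ fun j _ => ?_
    have hKj : Continuous fun v : Euc n => K v j :=
      (PiLp.continuous_apply 2 _ j).comp (by have : ContinuousSMul ℝ (Rows m d) := inferInstance; exact K.continuous_of_finiteDimensional)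
    split_ifs with hj
    · exact continuous_const.inner hKj
    · exact hKj.norm
  exact isClosed_le h1 (continuous_const.inner continuous_id)

lemma Kcone_convex (A : Euc n →ₗ[ℝ] Euc n) (K : Euc n →ₗ[ℝ] Rows m d) (u y : Euc n) :
    Convex ℝ (Kcone A K u y) := by
  intro v hv w hw a b ha hb hab
  simp only [Kcone, Set.mem_setOf_eq] at *
  have hcomb : K (a • v + b • w) = a • K v + b • K w := by
    rw [map_add, map_smul, map_smul]
  have hlin : ⟪u - A y, a • v + b • w⟫ = a * ⟪u - A y, v⟫ + b * ⟪u - A y, w⟫ := by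
    rw [inner_add_right, real_inner_smul_right, real_inner_smul_right]
  have hsub : dirRHS K y (a • v + b • w) ≤ a * dirRHS K y v + b * dirRHS K y w := by
    unfold dirRHS
    rw [Finset.mul_sum, Finset.mul_sum, ← Finset.sum_add_distrib]
    refine Finset.sum_le_sum fun j _ => ?_
    have happ : K (a • v + b • w) j = a • K v j + b • K w j := by
      rw [hcomb]; rfl
    split_ifs with hj
    · rw [happ, inner_add_right, real_inner_smul_right, real_inner_smul_right]
    · rw [happ]
      calc ‖a • K v j + b • K w j‖ ≤ ‖a • K v j‖ + ‖b • K w j‖ := norm_add_le _ _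
        _ = a * ‖K v j‖ + b * ‖K w j‖ := by
            rw [norm_smul, norm_smul, Real.norm_eq_abs, Real.norm_eq_abs,
              abs_of_nonneg ha, abs_of_nonneg hb]
  calc dirRHS K y (a • v + b • w) ≤ a * dirRHS K y v + b * dirRHS K y w := hsub
    _ ≤ a * ⟪u - A y, v⟫ + b * ⟪u - A y, w⟫ := by
        gcongr
    _ = ⟪u - A y, a • v + b • w⟫ := hlin.symm

lemma fy_expand (A : Euc n →ₗ[ℝ] Euc n)
    (hAsymm : ∀ x z : Euc n, ⟪A x, z⟫ = ⟪x, A z⟫)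
    (K : Euc n →ₗ[ℝ] Rows m d) (y h x w : Euc n) :
    fy A K y h (x + w) = fy A K y h x + (⟪A x, w⟫ + secondForm K y x w - ⟪h, w⟫)
      + (1/2) * (⟪A w, w⟫ + secondForm K y w w) := by
  rw [fy_eq, fy_eq, map_add, inner_add_left, inner_add_right, inner_add_right,
    secondForm_add_left, secondForm_add_right, secondForm_add_right, inner_add_right,
    secondForm_symm K y w x]
  have h1 : ⟪x, A w⟫ = ⟪A x, w⟫ := (hAsymm x w).symm
  have h2 : ⟪w, A x⟫ = ⟪A x, w⟫ := real_inner_comm _ _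
  have h3 : ⟪x, A x⟫ = ⟪A x, x⟫ := real_inner_comm _ _
  have h4 : ⟪w, A w⟫ = ⟪A w, w⟫ := real_inner_comm _ _
  rw [h1, h2, h3, h4]
  ring

lemma coercive (A : Euc n →ₗ[ℝ] Euc n)
    (hApos : ∀ x : Euc n, x ≠ 0 → 0 < ⟪x, A x⟫) :
    ∃ α > 0, ∀ x : Euc n, α * ‖x‖^2 ≤ ⟪x, A x⟫ := by
  by_cases hn : ∃ x : Euc n, x ≠ 0
  · obtain ⟨x₀, hx₀⟩ := hn
    have hA : Continuous fun x : Euc n => ⟪x, A x⟫ :=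
      continuous_id.inner A.continuous_of_finiteDimensional
    have hsph : (Metric.sphere (0:Euc n) 1).Nonempty := by
      refine ⟨‖x₀‖⁻¹ • x₀, ?_⟩
      rw [mem_sphere_zero_iff_norm, norm_smul, Real.norm_eq_abs,
        abs_of_pos (inv_pos.2 (norm_pos_iff.2 hx₀)),
        inv_mul_cancel₀ (norm_ne_zero_iff.2 hx₀)]
    obtain ⟨z, hz, hzmin⟩ := (isCompact_sphere (0:Euc n) 1).exists_isMinOn hsph hA.continuousOn
    have hz1 : ‖z‖ = 1 := mem_sphere_zero_iff_norm.1 hz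
    have hz0 : z ≠ 0 := by intro hc; rw [hc] at hz1; simp at hz1
    refine ⟨⟪z, A z⟫, hApos z hz0, fun x => ?_⟩
    by_cases hx : x = 0
    · simp [hx]
    · have hxn : (0:ℝ) < ‖x‖ := norm_pos_iff.2 hx
      have hmem : (‖x‖⁻¹ • x) ∈ Metric.sphere (0:Euc n) 1 := by
        rw [mem_sphere_zero_iff_norm, norm_smul, Real.norm_eq_abs,
          abs_of_pos (inv_pos.2 hxn), inv_mul_cancel₀ hxn.ne']
      have hle : ⟪z, A z⟫ ≤ ⟪‖x‖⁻¹ • x, A (‖x‖⁻¹ • x)⟫ := isMinOn_iff.1 hzmin _ hmem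
      have hcalc : ⟪‖x‖⁻¹ • x, A (‖x‖⁻¹ • x)⟫ = ‖x‖⁻¹ * (‖x‖⁻¹ * ⟪x, A x⟫) := by
        rw [map_smul, real_inner_smul_left, real_inner_smul_right]
      rw [hcalc] at hle
      calc ⟪z, A z⟫ * ‖x‖^2 ≤ (‖x‖⁻¹ * (‖x‖⁻¹ * ⟪x, A x⟫)) * ‖x‖^2 :=
            mul_le_mul_of_nonneg_right hle (by positivity)
        _ = (‖x‖⁻¹ * ‖x‖)^2 * ⟪x, A x⟫ := by ring
        _ = ⟪x, A x⟫ := by rw [inv_mul_cancel₀ hxn.ne']; ring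
  · push_neg at hn
    exact ⟨1, one_pos, fun x => by simp [hn x]⟩

/-- the VI of the first kind has exactly one solution, the unique
minimizer of `f_y` over `𝒦(y)`. -/
theorem stmt10 {n m d : ℕ} (A : Euc n →ₗ[ℝ] Euc n)
    (hAsymm : ∀ x z : Euc n, ⟪A x, z⟫ = ⟪x, A z⟫)
    (hApos : ∀ x : Euc n, x ≠ 0 → 0 < ⟪x, A x⟫)
    (K : Euc n →ₗ[ℝ] Rows m d) (hK : Function.Injective K)
    (u y : Euc n) (hy : IsVISol A K u y) (h : Euc n) :
    (∃! η : Euc n, VI1Sol A K u y h η) ∧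
    ∀ η : Euc n, VI1Sol A K u y h η →
      η ∈ Kcone A K u y ∧ ∀ v ∈ Kcone A K u y, v ≠ η → fy A K y h η < fy A K y h v := by
  classical
  obtain ⟨α, hα, hcoer⟩ := coercive A hApos
  have Qpos : ∀ w : Euc n, w ≠ 0 → 0 < ⟪A w, w⟫ + secondForm K y w w := by
    intro w hw
    have h1 : 0 < ⟪w, A w⟫ := hApos w hw
    have h2 : 0 ≤ secondForm K y w w := secondForm_self_nonneg K y w
    rw [real_inner_comm] at h1
    linarith
  -- VI solution is strict minimizer
  have vi_min : ∀ η, VI1Sol A K u y h η →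
      ∀ v ∈ Kcone A K u y, v ≠ η → fy A K y h η < fy A K y h v := by
    rintro η ⟨hηC, hvi⟩ v hv hne
    have hkey := fy_expand A hAsymm K y h η (v - η)
    have heq : η + (v - η) = v := by abel
    rw [heq] at hkey
    have h1 := hvi v hv
    have h2 := Qpos (v - η) (sub_ne_zero.2 hne)
    linarith
  -- existence of minimizer over Kcone
  set R : ℝ := 2 * ‖h‖ / α + 1 with hRdef
  have hR0 : 0 < R := by positivity
  have hS : IsCompact (Kcone A K u y ∩ Metric.closedBall 0 R) :=
    (isCompact_closedBall _ _).inter_left (Kcone_closed A K u y)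
  have h0S : (0:Euc n) ∈ Kcone A K u y ∩ Metric.closedBall 0 R :=
    ⟨Kcone_zero _ _ _ _, by simpa [Metric.mem_closedBall] using hR0.le⟩
  obtain ⟨η, hηS, hηmin⟩ := hS.exists_isMinOn ⟨0, h0S⟩ (fy_cont A K y h).continuousOn
  have hη0 : fy A K y h η ≤ 0 := by
    have := isMinOn_iff.1 hηmin 0 h0S
    rwa [fy_zero] at this
  have hmin : ∀ v ∈ Kcone A K u y, fy A K y h η ≤ fy A K y h v := by
    intro v hv
    by_cases hvR : ‖v‖ ≤ R
    · exact isMinOn_iff.1 hηmin v ⟨hv, by simpa [Metric.mem_closedBall, dist_zero_right] using hvR⟩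
    · push_neg at hvR
      rw [hRdef] at hvR
      have hlb : α/2 * ‖v‖^2 - ‖h‖*‖v‖ ≤ fy A K y h v := by
        rw [fy_eq]
        have hc := hcoer v
        have h2 := secondForm_self_nonneg K y v
        have h3 : ⟪h, v⟫ ≤ ‖h‖ * ‖v‖ := real_inner_le_norm _ _
        linarith
      have hv1 : 2 * ‖h‖ + α < α * ‖v‖ := by
        have := (div_lt_iff₀ hα).1 (by linarith : 2 * ‖h‖ / α < ‖v‖ - 1)
        nlinarith
      have hvpos : 1 < ‖v‖ := by
        have : (0:ℝ) ≤ 2 * ‖h‖ / α := by positivity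
        linarith
      have hpos : 0 < α/2 * ‖v‖^2 - ‖h‖*‖v‖ := by nlinarith
      linarith
  have hηC : η ∈ Kcone A K u y := hηS.1
  -- minimizer solves the VI
  have hVI : VI1Sol A K u y h η := by
    refine ⟨hηC, fun v hv => ?_⟩
    by_cases hw0 : v - η = 0
    · have hS0 : secondForm K y η 0 = 0 := by
        have := secondForm_smul_right K y η 0 0
        simpa using this
      rw [hw0, hS0, inner_zero_right, inner_zero_right]
      norm_num
    · by_contra hlt
      push_neg at hlt
      set w := v - η with hwdef
      set L := ⟪A η, w⟫ + secondForm K y η w - ⟪h, w⟫ with hLdef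
      have hL : L < 0 := by simp only [hLdef]; linarith
      set Q := ⟪A w, w⟫ + secondForm K y w w with hQdef
      have hQ : 0 < Q := Qpos w hw0
      set t : ℝ := min 1 (-L / Q) with htdef
      have ht0 : 0 < t := lt_min one_pos (div_pos (by linarith) hQ)
      have ht1 : t ≤ 1 := min_le_left _ _
      have htQ : t * Q ≤ -L := (le_div_iff₀ hQ).1 (min_le_right _ _)
      have hmemb : η + t • w ∈ Kcone A K u y := by
        have heq2 : η + t • w = (1 - t) • η + t • v := by
          rw [hwdef, smul_sub, sub_smul, one_smul]; abel
        rw [heq2]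
        exact Kcone_convex A K u y hηC hv (by linarith) ht0.le (by ring)
      have hge := hmin _ hmemb
      have hexp := fy_expand A hAsymm K y h η (t • w)
      have e1 : ⟪A η, t • w⟫ = t * ⟪A η, w⟫ := real_inner_smul_right _ _ _
      have e2 : ⟪A (t • w), t • w⟫ = t * (t * ⟪A w, w⟫) := by
        rw [map_smul, real_inner_smul_left, real_inner_smul_right]
      have e3 : secondForm K y η (t • w) = t * secondForm K y η w :=
        secondForm_smul_right K y η w t
      have e4 : secondForm K y (t • w) (t • w) = t * (t * secondForm K y w w) := by
        rw [secondForm_smul_left, secondForm_smul_right]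
      have e5 : ⟪h, t • w⟫ = t * ⟪h, w⟫ := real_inner_smul_right _ _ _
      rw [e1, e2, e3, e4, e5] at hexp
      have hfin : fy A K y h (η + t • w) = fy A K y h η + t * L + (1/2) * (t * (t * Q)) := by
        rw [hexp, hLdef, hQdef]; ring
      rw [hfin] at hge
      nlinarith [mul_le_mul_of_nonneg_left htQ ht0.le, mul_pos ht0 (neg_pos.2 hL)]
  have uniq : ∀ η₂, VI1Sol A K u y h η₂ → η₂ = η := by
    intro η₂ h2
    by_contra hne
    have a1 := vi_min η₂ h2 η hηC (fun hc => hne hc.symm)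
    have a2 := vi_min η hVI η₂ h2.1 hne
    linarith
  exact ⟨⟨η, hVI, uniq⟩, fun η' h' => ⟨h'.1, fun v hv hne => vi_min η' h' v hv hne⟩⟩
end
end

section
/- Let u, h ∈ ℝ^n, let y = S(u), and let (t_k) be a sequence of positive reals with t_k → 0 such that the difference quotients (S(u + t_k h) − S(u))/t_k converge to some η ∈ ℝ^n. Then η belongs to the cone 𝒦(y). -/
open scoped RealInnerProductSpace BigOperators Classical Topology

noncomputable section

variable {n m d : ℕ}

/-- limits of difference quotients of `S` belong to the cone `𝒦(y)`. -/
theorem stmt11 {n m d : ℕ} (A : Euc n →ₗ[ℝ] Euc n)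
    (hAsymm : ∀ x z : Euc n, ⟪A x, z⟫ = ⟪x, A z⟫)
    (hApos : ∀ x : Euc n, x ≠ 0 → 0 < ⟪x, A x⟫)
    (K : Euc n →ₗ[ℝ] Rows m d) (hK : Function.Injective K)
    (S : Euc n → Euc n) (hS : ∀ u : Euc n, IsVISol A K u (S u))
    (u h η : Euc n) (t : ℕ → ℝ) (ht : ∀ k, 0 < t k)
    (ht0 : Filter.Tendsto t Filter.atTop (nhds 0))
    (hquot : Filter.Tendsto (fun k => (t k)⁻¹ • (S (u + t k • h) - S u))
      Filter.atTop (nhds η)) :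
    η ∈ Kcone A K u (S u) := by
  classical
  set y := S u with hy
  set ηk : ℕ → Euc n := fun k => (t k)⁻¹ • (S (u + t k • h) - y) with hηk
  have hyk : ∀ k, S (u + t k • h) - y = t k • ηk k := by
    intro k
    simp only [hηk, smul_smul, mul_inv_cancel₀ (ht k).ne', one_smul]
  have key : ∀ k, dirRHS K y (ηk k) ≤ ⟪u + t k • h - A (S (u + t k • h)), ηk k⟫ := by
    intro k
    set yk := S (u + t k • h) with hykdef
    have hVI := hS (u + t k • h) y
    have hsum : ∑ j, (‖K yk j‖ - ‖K y j‖) ≤ ⟪u + t k • h - A yk, yk - y⟫ := by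
      have e : (⟪u + t k • h - A yk, yk - y⟫ : ℝ)
          = ⟪A yk, y - yk⟫ - ⟪u + t k • h, y - yk⟫ := by
        rw [inner_sub_left]
        have hr : yk - y = -(y - yk) := by abel
        rw [hr, inner_neg_right, inner_neg_right]
        ring
      have e2 : ∑ j, (‖K yk j‖ - ‖K y j‖) = -∑ j, (‖K y j‖ - ‖K yk j‖) := by
        rw [← Finset.sum_neg_distrib]
        exact Finset.sum_congr rfl fun j _ => by ring
      rw [e, e2]
      linarith [hVI]
    have hterm : t k * dirRHS K y (ηk k) ≤ ∑ j, (‖K yk j‖ - ‖K y j‖) := by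
      rw [dirRHS, Finset.mul_sum]
      apply Finset.sum_le_sum
      intro j _
      have hKdiff : K yk j - K y j = t k • K (ηk k) j := by
        have h1 : K yk - K y = K (yk - y) := (map_sub K yk y).symm
        have h2 : K (yk - y) = t k • K (ηk k) := by rw [hyk k, map_smul]
        calc K yk j - K y j = (K yk - K y) j := rfl
          _ = (t k • K (ηk k)) j := by rw [h1, h2]
          _ = t k • K (ηk k) j := rfl
      by_cases hj : K y j = 0
      · simp only [hj, ne_eq, not_true_eq_false, if_false]
        have h3 : K yk j = t k • K (ηk k) j := by
          rw [← hKdiff, hj, sub_zero]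
        rw [norm_zero, sub_zero, h3, norm_smul, Real.norm_eq_abs,
          abs_of_pos (ht k)]
      · simp only [ne_eq, hj, not_false_eq_true, if_true]
        have hnorm : ‖K y j‖ ≠ 0 := norm_ne_zero_iff.mpr hj
        have e1 : t k * ⟪(‖K y j‖)⁻¹ • K y j, K (ηk k) j⟫
            = ⟪(‖K y j‖)⁻¹ • K y j, K yk j⟫ - ‖K y j‖ := by
          rw [← real_inner_smul_right, ← hKdiff, inner_sub_right]
          congr 1
          rw [real_inner_smul_left, real_inner_self_eq_norm_sq]
          field_simp
        rw [e1]
        have e2 : ⟪(‖K y j‖)⁻¹ • K y j, K yk j⟫ ≤ ‖K yk j‖ := by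
          calc ⟪(‖K y j‖)⁻¹ • K y j, K yk j⟫
              ≤ ‖(‖K y j‖)⁻¹ • K y j‖ * ‖K yk j‖ := real_inner_le_norm _ _
            _ = ‖K yk j‖ := by
              rw [norm_smul, Real.norm_eq_abs, abs_inv, abs_norm,
                inv_mul_cancel₀ hnorm, one_mul]
        linarith
    have hcomb : t k * dirRHS K y (ηk k) ≤ t k * ⟪u + t k • h - A yk, ηk k⟫ := by
      have := le_trans hterm hsum
      rwa [hyk k, real_inner_smul_right] at this
    exact le_of_mul_le_mul_left hcomb (ht k)
  have hKcont : ∀ j : Fin m, Continuous fun v : Euc n => K v j := by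
    intro j
    exact LinearMap.continuous_of_finiteDimensional
      { toFun := fun v : Euc n => K v j
        map_add' := fun a b => by show K (a + b) j = K a j + K b j; rw [map_add]; rfl
        map_smul' := fun (c : ℝ) a => by show K (c • a) j = c • K a j; rw [map_smul]; rfl }
  have h1 : Filter.Tendsto (fun k => dirRHS K y (ηk k)) Filter.atTop
      (nhds (dirRHS K y η)) := by
    have hc : Continuous fun v : Euc n => dirRHS K y v := by
      unfold dirRHS
      apply continuous_finset_sum
      intro j _
      by_cases hj : K y j = 0
      · simp only [hj, ne_eq, not_true_eq_false, if_false]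
        exact (hKcont j).norm
      · simp only [ne_eq, hj, not_false_eq_true, if_true]
        exact continuous_const.inner (hKcont j)
    exact (hc.tendsto η).comp hquot
  have hy0 : Filter.Tendsto (fun k => S (u + t k • h)) Filter.atTop (nhds y) := by
    have hlim : Filter.Tendsto (fun k => y + t k • ηk k) Filter.atTop
        (nhds (y + (0 : ℝ) • η)) := tendsto_const_nhds.add (ht0.smul hquot)
    have heq : ∀ k, y + t k • ηk k = S (u + t k • h) := by
      intro k; rw [← hyk k]; abel
    simpa [heq] using hlim.congr heq
  have h2 : Filter.Tendsto (fun k => (⟪u + t k • h - A (S (u + t k • h)), ηk k⟫ : ℝ))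
      Filter.atTop (nhds ⟪u - A y, η⟫) := by
    have hA : Filter.Tendsto (fun k => A (S (u + t k • h))) Filter.atTop (nhds (A y)) :=
      ((A.continuous_of_finiteDimensional).tendsto y).comp hy0
    have hth : Filter.Tendsto (fun k => u + t k • h) Filter.atTop
        (nhds (u + (0 : ℝ) • h)) := tendsto_const_nhds.add (ht0.smul_const h)
    have hleft : Filter.Tendsto (fun k => u + t k • h - A (S (u + t k • h)))
        Filter.atTop (nhds (u - A y)) := by
      simpa using hth.sub hA
    exact hleft.inner hquot
  show dirRHS K y η ≤ ⟪u - A y, η⟫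
  exact le_of_tendsto_of_tendsto' h1 h2 key
end
end

section
/- Let J : ℝ^n × ℝ^n → ℝ be continuously differentiable and let ū ∈ ℝ^n be a local minimizer of u ↦ J(S(u), u) over all of ℝ^n, with ȳ = S(ū). Then there exist q ∈ ℝ^{m×d}, p ∈ ℝ^n and μ ∈ ℝ^n such that: Aȳ + 𝕂*q = ū, ⟨q_j, (𝕂ȳ)_j⟩ = |(𝕂ȳ)_j| and |q_j| ≤ 1 for all j = 1,…,m; ⟨Ap, v⟩ + ∑_{j∈ℐ(ȳ)} ⟨T_j (𝕂p)_j, (𝕂v)_j⟩ = ⟨∇_y J(ȳ, ū) − μ, v⟩ for all v ∈ ℝ^n, where T_j := (1/|(𝕂ȳ)_j|)(I − (𝕂ȳ)_j (𝕂ȳ)_jᵀ/|(𝕂ȳ)_j|²); p ∈ 𝒦(ȳ); ⟨μ, φ⟩ ≥ 0 for all φ ∈ 𝒦(ȳ); and p + ∇_u J(ȳ, ū) = 0. -/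
open scoped RealInnerProductSpace BigOperators Classical Topology

noncomputable section

variable {n m d : ℕ}

/-- The complementarity relations alone. -/
def ComplQ (K : Euc n →ₗ[ℝ] Rows m d) (y : Euc n) (q : Rows m d) : Prop :=
  (∀ j, ⟪q j, K y j⟫ = ‖K y j‖) ∧ ∀ j, ‖q j‖ ≤ 1

namespace Stmt19Aux

section Rowlevel
variable {d : ℕ}

abbrev V (d : ℕ) := EuclideanSpace ℝ (Fin d)

def uu (a b : V d) : ℝ := ‖a‖⁻¹ * ⟪a, b⟫

def Brow (a b c : V d) : ℝ := ‖a‖⁻¹ * (⟪b, c⟫ - uu a b * uu a c)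

def Drow (t : ℝ) (a b : V d) : ℝ := ‖a + t • b‖ + ‖a‖ + t * uu a b

def ρrow (t : ℝ) (a b : V d) : ℝ := (‖b‖ ^ 2 - uu a b ^ 2) / Drow t a b

lemma uu_abs_le (a b : V d) : |uu a b| ≤ ‖b‖ := by
  rcases eq_or_ne a 0 with rfl | ha
  · simp [uu]
  · have ha' : (0:ℝ) < ‖a‖ := norm_pos_iff.mpr ha
    have h := abs_real_inner_le_norm a b
    rw [uu, abs_mul, abs_inv, abs_norm, inv_mul_le_iff₀ ha']
    nlinarith [norm_nonneg a, norm_nonneg b]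

lemma uu_sq_le (a b : V d) : uu a b ^ 2 ≤ ‖b‖ ^ 2 := by
  calc uu a b ^ 2 = |uu a b| ^ 2 := (sq_abs _).symm
  _ ≤ ‖b‖ ^ 2 := pow_le_pow_left₀ (abs_nonneg _) (uu_abs_le a b) 2

lemma Drow_pos {t : ℝ} {a b : V d} (ht : 0 ≤ t) (hsm : t * ‖b‖ < ‖a‖) :
    0 < Drow t a b := by
  have h1 : ‖a‖ - t * ‖b‖ ≤ ‖a + t • b‖ := by
    have h := norm_add_le (a + t • b) (-(t • b))
    simp only [add_neg_cancel_right, norm_neg] at h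
    rw [norm_smul, Real.norm_eq_abs, abs_of_nonneg ht] at h
    linarith
  have h2 : -(t * ‖b‖) ≤ t * uu a b := by
    have h3 := uu_abs_le a b
    have h4 := neg_abs_le (uu a b)
    nlinarith
  unfold Drow; nlinarith

lemma rowexp {t : ℝ} {a b : V d} (ha : a ≠ 0) (ht : 0 ≤ t) (hsm : t * ‖b‖ < ‖a‖) :
    ‖a + t • b‖ - ‖a‖ - t * uu a b = t ^ 2 * ρrow t a b := by
  have hD := Drow_pos ht hsm
  have hna : (0:ℝ) < ‖a‖ := norm_pos_iff.mpr ha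
  have key : (‖a + t • b‖ - ‖a‖ - t * uu a b) * Drow t a b = t ^ 2 * (‖b‖ ^ 2 - uu a b ^ 2) := by
    have hsq : ‖a + t • b‖ ^ 2 = ‖a‖ ^ 2 + 2 * (t * ⟪a, b⟫) + t ^ 2 * ‖b‖ ^ 2 := by
      rw [norm_add_sq_real, inner_smul_right, norm_smul, Real.norm_eq_abs, abs_of_nonneg ht,
        mul_pow]
      try ring
    have huu : ‖a‖ * uu a b = ⟪a, b⟫ := by rw [uu]; field_simp
    unfold Drow
    nlinarith [hsq, huu]
  have h2 : t ^ 2 * ρrow t a b = t ^ 2 * (‖b‖ ^ 2 - uu a b ^ 2) / Drow t a b := by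
    rw [ρrow]; ring
  rw [h2, eq_div_iff hD.ne']
  exact key

lemma ρrow_nonneg {t : ℝ} {a b : V d} (ht : 0 ≤ t) (hsm : t * ‖b‖ < ‖a‖) :
    0 ≤ ρrow t a b :=
  div_nonneg (by nlinarith [uu_sq_le a b]) (Drow_pos ht hsm).le

lemma ρrow_zero {a b : V d} (ha : a ≠ 0) : ρrow 0 a b = Brow a b b / 2 := by
  have hna : (0:ℝ) < ‖a‖ := norm_pos_iff.mpr ha
  rw [ρrow, Drow, Brow]
  simp only [zero_smul, add_zero, zero_mul]
  rw [real_inner_self_eq_norm_sq]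
  field_simp
  ring

lemma Brow_nonneg (a b : V d) : 0 ≤ Brow a b b := by
  rw [Brow, real_inner_self_eq_norm_sq]
  have h1 := uu_sq_le a b
  have h2 : 0 ≤ ‖b‖ ^ 2 - uu a b * uu a b := by nlinarith
  positivity

lemma Brow_symm (a b c : V d) : Brow a b c = Brow a c b := by
  rw [Brow, Brow, real_inner_comm]; ring

lemma Brow_quad (a v z : V d) :
    Brow a z z / 2 - Brow a v v / 2 - Brow a v (z - v) = Brow a (z - v) (z - v) / 2 := by
  simp only [Brow, uu, inner_sub_left, inner_sub_right]
  rw [real_inner_comm v z]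
  ring

lemma Brow_stmt (a b c : V d) (ha : a ≠ 0) :
    ⟪(‖a‖)⁻¹ • (b - ((⟪a, b⟫) / ‖a‖ ^ 2) • a), c⟫ = Brow a b c := by
  have hna : (0:ℝ) < ‖a‖ := norm_pos_iff.mpr ha
  rw [real_inner_smul_left, inner_sub_left, real_inner_smul_left, Brow, uu, uu]
  field_simp

lemma Brow_add_left (a b b' c : V d) : Brow a (b + b') c = Brow a b c + Brow a b' c := by
  have h1 : uu a (b + b') = uu a b + uu a b' := by rw [uu, uu, uu, inner_add_right]; ring
  rw [Brow, Brow, Brow, h1, inner_add_left]; ring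

lemma Brow_smul_left (a : V d) (t : ℝ) (b c : V d) : Brow a (t • b) c = t * Brow a b c := by
  have h1 : uu a (t • b) = t * uu a b := by rw [uu, uu, inner_smul_right]; ring
  rw [Brow, Brow, h1, real_inner_smul_left]; ring

end Rowlevel

section Globlevel
variable {n m d : ℕ} (K : Euc n →ₗ[ℝ] Rows m d) (y : Euc n)

def Kj (j : Fin m) : Euc n →ₗ[ℝ] V d where
  toFun := fun x => K x j
  map_add' := by intro x y; simp [map_add]
  map_smul' := by intro c x; simp [map_smul]

lemma Kj_cont (j : Fin m) : Continuous fun x : Euc n => K x j :=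
  (Kj K j).continuous_of_finiteDimensional

def BB (x v : Euc n) : ℝ := ∑ j, if K y j ≠ 0 then Brow (K y j) (K x j) (K v j) else 0

def QQ (x : Euc n) : ℝ := BB K y x x / 2

def rr (t : ℝ) (x : Euc n) : ℝ := ∑ j, if K y j ≠ 0 then ρrow t (K y j) (K x j) else 0

def gg (v : Euc n) : ℝ := ∑ j, ‖K v j‖

lemma dirRHS_eq (v : Euc n) :
    dirRHS K y v = ∑ j, if K y j ≠ 0 then uu (K y j) (K v j) else ‖K v j‖ := by
  refine Finset.sum_congr rfl fun j _ => ?_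
  by_cases h : K y j ≠ 0 <;> simp only [h, if_true, if_false]
  rw [uu, real_inner_smul_left]

lemma rr_tendsto {t : ℕ → ℝ} {w : ℕ → Euc n} {L : Euc n}
    (ht : Filter.Tendsto t Filter.atTop (nhds 0))
    (hw : Filter.Tendsto w Filter.atTop (nhds L)) :
    Filter.Tendsto (fun k => rr K y (t k) (w k)) Filter.atTop (nhds (rr K y 0 L)) := by
  unfold rr
  refine tendsto_finset_sum _ fun j _ => ?_
  by_cases h : K y j ≠ 0
  · simp only [if_pos h, ρrow]
    have hKj : Filter.Tendsto (fun k => K (w k) j) Filter.atTop (nhds (K L j)) :=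
      ((Kj_cont K j).tendsto L).comp hw
    have hnum : Filter.Tendsto (fun k => ‖K (w k) j‖ ^ 2 - uu (K y j) (K (w k) j) ^ 2)
        Filter.atTop (nhds (‖K L j‖ ^ 2 - uu (K y j) (K L j) ^ 2)) := by
      refine Filter.Tendsto.sub ?_ ?_
      · exact ((continuous_norm.tendsto _).comp hKj).pow 2
      · exact ((((continuous_const.inner continuous_id).tendsto _).comp hKj).const_mul _).pow 2
    have hden : Filter.Tendsto (fun k => Drow (t k) (K y j) (K (w k) j))
        Filter.atTop (nhds (Drow 0 (K y j) (K L j))) := by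
      unfold Drow
      refine Filter.Tendsto.add (Filter.Tendsto.add ?_ tendsto_const_nhds) ?_
      · refine (continuous_norm.tendsto _).comp ?_
        refine Filter.Tendsto.add tendsto_const_nhds ?_
        have hp : Filter.Tendsto (fun k => ((t k), (K (w k) j))) Filter.atTop
            (nhds ((0 : ℝ), K L j)) := ht.prodMk_nhds hKj
        exact (continuous_fst.smul continuous_snd).tendsto ((0:ℝ), K L j) |>.comp hp
      · refine Filter.Tendsto.mul ht ?_
        exact (((continuous_const.inner continuous_id).tendsto _).comp hKj).const_mul _
    have hden0 : Drow 0 (K y j) (K L j) ≠ 0 := by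
      have hpos : (0:ℝ) < ‖K y j‖ := norm_pos_iff.mpr h
      unfold Drow
      simp only [zero_smul, add_zero, zero_mul]
      positivity
    exact hnum.div hden hden0
  · simp only [if_neg h]
    exact tendsto_const_nhds

lemma dirRHS_cont : Continuous (dirRHS K y) := by
  have hrw : (dirRHS K y) = fun v => ∑ j, if K y j ≠ 0 then uu (K y j) (K v j) else ‖K v j‖ :=
    funext fun v => dirRHS_eq K y v
  rw [hrw]
  refine continuous_finset_sum _ fun j _ => ?_
  by_cases h : K y j ≠ 0
  · simp only [if_pos h]
    have : Continuous fun x : Euc n => uu (K y j) (K x j) := by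
      unfold uu; exact continuous_const.mul (continuous_const.inner (Kj_cont K j))
    exact this
  · simp only [if_neg h]
    exact (Kj_cont K j).norm

lemma K_add_smul (x : Euc n) (t : ℝ) (j : Fin m) :
    K (y + t • x) j = K y j + t • K x j := by
  simp [map_add, map_smul]

lemma K_sub_apply (x z : Euc n) (j : Fin m) : K (x - z) j = K x j - K z j := by
  simp [map_sub]

lemma gexp {t : ℝ} (ht : 0 < t) (x : Euc n)
    (hsm : ∀ j, K y j ≠ 0 → t * ‖K x j‖ < ‖K y j‖) :
    gg K (y + t • x) - gg K y = t * dirRHS K y x + t ^ 2 * rr K y t x := by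
  unfold gg rr
  rw [dirRHS_eq, Finset.mul_sum, Finset.mul_sum, ← Finset.sum_add_distrib,
    ← Finset.sum_sub_distrib]
  refine Finset.sum_congr rfl fun j _ => ?_
  rw [K_add_smul]
  by_cases h : K y j ≠ 0
  · simp only [if_pos h]
    have := rowexp h ht.le (hsm j h)
    linarith
  · rw [not_not] at h
    simp only [h, ne_eq, eq_self_iff_true, not_true_eq_false, if_false, zero_add,
      norm_zero, norm_smul, Real.norm_eq_abs, abs_of_pos ht, mul_zero, add_zero]
    ring

lemma rr_nonneg {t : ℝ} (ht : 0 ≤ t) (x : Euc n)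
    (hsm : ∀ j, K y j ≠ 0 → t * ‖K x j‖ < ‖K y j‖) : 0 ≤ rr K y t x := by
  refine Finset.sum_nonneg fun j _ => ?_
  by_cases h : K y j ≠ 0
  · simp only [if_pos h]; exact ρrow_nonneg ht (hsm j h)
  · simp only [if_neg h]; exact le_refl 0

lemma rr_zero (x : Euc n) : rr K y 0 x = QQ K y x := by
  unfold rr QQ BB
  rw [Finset.sum_div]
  refine Finset.sum_congr rfl fun j _ => ?_
  by_cases h : K y j ≠ 0
  · simp only [if_pos h]; exact ρrow_zero h
  · simp only [if_neg h]; norm_num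

lemma BB_symm (x v : Euc n) : BB K y x v = BB K y v x := by
  unfold BB
  exact Finset.sum_congr rfl fun j _ => by by_cases h : K y j ≠ 0 <;>
    simp only [if_pos, if_neg, h, if_true, if_false, Brow_symm]

lemma BB_nonneg (x : Euc n) : 0 ≤ BB K y x x := by
  refine Finset.sum_nonneg fun j _ => ?_
  by_cases h : K y j ≠ 0
  · simp only [if_pos h]; exact Brow_nonneg _ _
  · simp only [if_neg h]; exact le_refl 0

lemma QQ_nonneg (x : Euc n) : 0 ≤ QQ K y x := by
  have := BB_nonneg K y x; unfold QQ; linarith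

lemma QQ_quad (v z : Euc n) :
    QQ K y z - QQ K y v - BB K y v (z - v) = QQ K y (z - v) := by
  unfold QQ BB
  rw [Finset.sum_div, Finset.sum_div, ← Finset.sum_sub_distrib, ← Finset.sum_sub_distrib,
    Finset.sum_div]
  refine Finset.sum_congr rfl fun j _ => ?_
  by_cases h : K y j ≠ 0
  · simp only [if_pos h, K_sub_apply]
    exact Brow_quad _ _ _
  · simp only [if_neg h]; norm_num

end Globlevel

section VIlevel
variable {n m d : ℕ} (K : Euc n →ₗ[ℝ] Rows m d) (A : Euc n →ₗ[ℝ] Euc n)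

def EE (u v : Euc n) : ℝ := (1 / 2) * ⟪v, A v⟫ + gg K v - ⟪u, v⟫

lemma vi_iff (u yy : Euc n) (hy : IsVISol A K u yy) (v : Euc n) :
    ⟪A yy, v - yy⟫ + (gg K v - gg K yy) ≥ ⟪u, v - yy⟫ := by
  have := hy v
  rwa [Finset.sum_sub_distrib] at this

lemma inner_A_expand (hAsymm : ∀ x z : Euc n, ⟪A x, z⟫ = ⟪x, A z⟫) (v yy : Euc n) :
    ⟪v - yy, A (v - yy)⟫ = ⟪v, A v⟫ - 2 * ⟪A yy, v - yy⟫ - ⟪yy, A yy⟫ := by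
  rw [map_sub, inner_sub_left, inner_sub_right, inner_sub_right, inner_sub_right]
  have h1 : ⟪yy, A v⟫ = ⟪A yy, v⟫ := by rw [← hAsymm]
  have h2 : ⟪v, A yy⟫ = ⟪A yy, v⟫ := real_inner_comm _ _
  have h3 : ⟪yy, A yy⟫ = ⟪A yy, yy⟫ := real_inner_comm _ _
  linarith

lemma energy_min (hAsymm : ∀ x z : Euc n, ⟪A x, z⟫ = ⟪x, A z⟫)
    (hApos : ∀ x : Euc n, x ≠ 0 → 0 < ⟪x, A x⟫)
    (u yy : Euc n) (hy : IsVISol A K u yy) (v : Euc n) :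
    EE K A u yy ≤ EE K A u v := by
  have hvi := vi_iff K A u yy hy v
  have hexp := inner_A_expand A hAsymm v yy
  have hpos : 0 ≤ ⟪v - yy, A (v - yy)⟫ := by
    rcases eq_or_ne (v - yy) 0 with h | h
    · rw [h]; simp
    · exact (hApos _ h).le
  have hu : ⟪u, v - yy⟫ = ⟪u, v⟫ - ⟪u, yy⟫ := inner_sub_right _ _ _
  unfold EE
  nlinarith

lemma exists_alpha (hApos : ∀ x : Euc n, x ≠ 0 → 0 < ⟪x, A x⟫) :
    ∃ α : ℝ, 0 < α ∧ ∀ x : Euc n, α * ‖x‖ ^ 2 ≤ ⟪x, A x⟫ := by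
  rcases subsingleton_or_nontrivial (Euc n) with hsub | hnt
  · refine ⟨1, one_pos, fun x => ?_⟩
    have : x = 0 := Subsingleton.elim _ _
    simp [this]
  · have hsc : IsCompact (Metric.sphere (0 : Euc n) 1) := isCompact_sphere _ _
    have hne : (Metric.sphere (0 : Euc n) 1).Nonempty :=
      NormedSpace.sphere_nonempty.mpr zero_le_one
    have hcont : Continuous fun x : Euc n => ⟪x, A x⟫ :=
      continuous_id.inner A.continuous_of_finiteDimensional
    obtain ⟨x₀, hx₀mem, hx₀min⟩ := hsc.exists_isMinOn hne hcont.continuousOn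
    have hx₀norm : ‖x₀‖ = 1 := by simpa using hx₀mem
    have hx₀ne : x₀ ≠ 0 := by intro h; rw [h] at hx₀norm; simp at hx₀norm
    refine ⟨⟪x₀, A x₀⟫, hApos _ hx₀ne, fun x => ?_⟩
    rcases eq_or_ne x 0 with rfl | hx
    · simp
    · have hnx : (0:ℝ) < ‖x‖ := norm_pos_iff.mpr hx
      have hmem : (‖x‖⁻¹ • x) ∈ Metric.sphere (0 : Euc n) 1 := by
        simp [norm_smul, abs_of_pos (inv_pos.mpr hnx), inv_mul_cancel₀ hnx.ne']
      have hmin := hx₀min hmem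
      simp only [Set.mem_setOf_eq] at hmin
      have hscale : ⟪‖x‖⁻¹ • x, A (‖x‖⁻¹ • x)⟫ = ‖x‖⁻¹ ^ 2 * ⟪x, A x⟫ := by
        rw [map_smul, real_inner_smul_left, real_inner_smul_right]; ring
      rw [hscale] at hmin
      have h2 : ⟪x₀, A x₀⟫ * ‖x‖ ^ 2 ≤ ‖x‖⁻¹ ^ 2 * ⟪x, A x⟫ * ‖x‖ ^ 2 := by nlinarith
      calc ⟪x₀, A x₀⟫ * ‖x‖ ^ 2 ≤ ‖x‖⁻¹ ^ 2 * ⟪x, A x⟫ * ‖x‖ ^ 2 := h2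
        _ = ⟪x, A x⟫ := by field_simp

lemma lipschitz {α : ℝ} (hα : 0 < α) (hcoer : ∀ x : Euc n, α * ‖x‖ ^ 2 ≤ ⟪x, A x⟫)
    (u₁ u₂ y₁ y₂ : Euc n) (h₁ : IsVISol A K u₁ y₁) (h₂ : IsVISol A K u₂ y₂) :
    ‖y₁ - y₂‖ ≤ α⁻¹ * ‖u₁ - u₂‖ := by
  have hv1 := vi_iff K A u₁ y₁ h₁ y₂
  have hv2 := vi_iff K A u₂ y₂ h₂ y₁
  have hkey : ⟪y₁ - y₂, A (y₁ - y₂)⟫ ≤ ⟪u₁ - u₂, y₁ - y₂⟫ := by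
    have e1 : ⟪y₁ - y₂, A (y₁ - y₂)⟫
        = -(⟪A y₁, y₂ - y₁⟫ + ⟪A y₂, y₁ - y₂⟫) := by
      rw [map_sub, inner_sub_left, inner_sub_right, inner_sub_right, inner_sub_right,
        inner_sub_right]
      have c1 : ⟪y₁, A y₁⟫ = ⟪A y₁, y₁⟫ := real_inner_comm _ _
      have c2 : ⟪y₂, A y₂⟫ = ⟪A y₂, y₂⟫ := real_inner_comm _ _
      have c3 : ⟪y₁, A y₂⟫ = ⟪A y₂, y₁⟫ := real_inner_comm _ _
      have c4 : ⟪y₂, A y₁⟫ = ⟪A y₁, y₂⟫ := real_inner_comm _ _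
      linarith
    have e2 : ⟪u₁ - u₂, y₁ - y₂⟫ = -(⟪u₁, y₂ - y₁⟫ + ⟪u₂, y₁ - y₂⟫) := by
      rw [inner_sub_left, inner_sub_right, inner_sub_right, inner_sub_right]
      linarith
    linarith
  have hcs : ⟪u₁ - u₂, y₁ - y₂⟫ ≤ ‖u₁ - u₂‖ * ‖y₁ - y₂‖ := real_inner_le_norm _ _
  have hc := hcoer (y₁ - y₂)
  rcases eq_or_lt_of_le (norm_nonneg (y₁ - y₂)) with h0 | h0
  · rw [← h0]; positivity
  · have : α * ‖y₁ - y₂‖ ≤ ‖u₁ - u₂‖ := by nlinarith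
    calc ‖y₁ - y₂‖ = α⁻¹ * (α * ‖y₁ - y₂‖) := by field_simp
    _ ≤ α⁻¹ * ‖u₁ - u₂‖ := by
        exact mul_le_mul_of_nonneg_left this (inv_pos.mpr hα).le

end VIlevel
end Stmt19Aux
namespace Stmt19Aux
open Filter Topology

variable {n m d : ℕ}

def ff (A : Euc n →ₗ[ℝ] Euc n) (K : Euc n →ₗ[ℝ] Rows m d) (y h x : Euc n) : ℝ :=
  (1 / 2) * ⟪x, A x⟫ - ⟪h, x⟫ + QQ K y x

lemma dirRHS_zero (K : Euc n →ₗ[ℝ] Rows m d) (y : Euc n) : dirRHS K y 0 = 0 := by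
  rw [dirRHS_eq]
  refine Finset.sum_eq_zero fun j _ => ?_
  by_cases h : K y j ≠ 0 <;> simp [h, uu, map_zero]

lemma Kcone_zero (A : Euc n →ₗ[ℝ] Euc n) (K : Euc n →ₗ[ℝ] Rows m d) (u y : Euc n) :
    (0 : Euc n) ∈ Kcone A K u y := by
  simp only [Kcone, Set.mem_setOf_eq, dirRHS_zero, inner_zero_right]
  exact le_refl 0

lemma dirRHS_ge {A : Euc n →ₗ[ℝ] Euc n} {K : Euc n →ₗ[ℝ] Rows m d}
    {u ybar : Euc n} (hVI : IsVISol A K u ybar) (x : Euc n) :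
    ⟪u, x⟫ - ⟪A ybar, x⟫ ≤ dirRHS K ybar x := by
  set tk : ℕ → ℝ := fun k => 1 / (k + 1) with htk_def
  have htkpos : ∀ k, 0 < tk k := fun k => by positivity
  have htklim : Tendsto tk atTop (𝓝 0) := tendsto_one_div_add_atTop_nhds_zero_nat
  have hev : ∀ᶠ k in atTop, ∀ j, K ybar j ≠ 0 → tk k * ‖K x j‖ < ‖K ybar j‖ := by
    rw [Filter.eventually_all]
    intro j
    by_cases hj : K ybar j ≠ 0
    · have hlim : Tendsto (fun k => tk k * ‖K x j‖) atTop (𝓝 0) := by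
        have h0 := htklim.mul_const ‖K x j‖
        rwa [zero_mul] at h0
      filter_upwards [hlim.eventually_lt_const (norm_pos_iff.mpr hj)] with k hk
      exact fun _ => hk
    · filter_upwards with k hcon
      exact absurd hcon hj
  have hineq : ∀ᶠ k in atTop,
      ⟪u, x⟫ - ⟪A ybar, x⟫ ≤ dirRHS K ybar x + tk k * rr K ybar (tk k) x := by
    filter_upwards [hev] with k hsm
    have hvi := vi_iff K A u ybar hVI (ybar + tk k • x)
    rw [add_sub_cancel_left, inner_smul_right, inner_smul_right] at hvi
    have hg := gexp K ybar (htkpos k) x hsm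
    have ht := htkpos k
    nlinarith [hvi, hg]
  have hrhs : Tendsto (fun k => dirRHS K ybar x + tk k * rr K ybar (tk k) x) atTop
      (𝓝 (dirRHS K ybar x)) := by
    have h1 : Tendsto (fun k => rr K ybar (tk k) x) atTop (𝓝 (rr K ybar 0 x)) :=
      rr_tendsto K ybar htklim tendsto_const_nhds
    have h2 : Tendsto (fun k => tk k * rr K ybar (tk k) x) atTop (𝓝 0) := by
      simpa using htklim.mul h1
    simpa using tendsto_const_nhds.add h2
  exact ge_of_tendsto hrhs hineq

lemma EE_expand {A : Euc n →ₗ[ℝ] Euc n} {K : Euc n →ₗ[ℝ] Rows m d}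
    (hAsymm : ∀ x z : Euc n, ⟪A x, z⟫ = ⟪x, A z⟫)
    (ybar : Euc n) (u' h : Euc n) {t : ℝ} (ht : 0 < t) (x : Euc n)
    (hsm : ∀ j, K ybar j ≠ 0 → t * ‖K x j‖ < ‖K ybar j‖) :
    EE K A (u' + t • h) (ybar + t • x) - EE K A (u' + t • h) ybar
      = t * (dirRHS K ybar x + ⟪A ybar, x⟫ - ⟪u', x⟫)
        + t ^ 2 * ((1 / 2) * ⟪x, A x⟫ - ⟪h, x⟫ + rr K ybar t x) := by
  have hg := gexp K ybar ht x hsm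
  have hAexp : ⟪ybar + t • x, A (ybar + t • x)⟫
      = ⟪ybar, A ybar⟫ + 2 * t * ⟪A ybar, x⟫ + t ^ 2 * ⟪x, A x⟫ := by
    rw [map_add, map_smul, inner_add_left, inner_add_right, inner_add_right,
      real_inner_smul_left, real_inner_smul_right, real_inner_smul_left,
      real_inner_smul_right]
    have c1 : ⟪ybar, A x⟫ = ⟪A ybar, x⟫ := by
      calc ⟪ybar, A x⟫ = ⟪A x, ybar⟫ := real_inner_comm _ _
      _ = ⟪x, A ybar⟫ := hAsymm x ybar
      _ = ⟪A ybar, x⟫ := real_inner_comm _ _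
    have c2 : ⟪x, A ybar⟫ = ⟪A ybar, x⟫ := real_inner_comm _ _
    rw [c1, c2]; ring
  have hinner1 : ⟪u' + t • h, ybar + t • x⟫
      = ⟪u', ybar⟫ + t * ⟪u', x⟫ + t * ⟪h, ybar⟫ + t ^ 2 * ⟪h, x⟫ := by
    rw [inner_add_left, inner_add_right, inner_add_right, real_inner_smul_left,
      real_inner_smul_right, real_inner_smul_left, real_inner_smul_right]
    ring
  have hinner2 : ⟪u' + t • h, ybar⟫ = ⟪u', ybar⟫ + t * ⟪h, ybar⟫ := by
    rw [inner_add_left, real_inner_smul_left]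
  unfold EE
  rw [hAexp, hinner1, hinner2]
  linarith [hg]

end Stmt19Aux
namespace Stmt19Aux
open Filter Topology

variable {n m d : ℕ}

lemma core {A : Euc n →ₗ[ℝ] Euc n} {K : Euc n →ₗ[ℝ] Rows m d}
    (hAsymm : ∀ x z : Euc n, ⟪A x, z⟫ = ⟪x, A z⟫)
    (hApos : ∀ x : Euc n, x ≠ 0 → 0 < ⟪x, A x⟫)
    {u ybar : Euc n} (hVI : IsVISol A K u ybar) (h : Euc n)
    {t : ℕ → ℝ} (ht0 : ∀ k, 0 < t k) (htlim : Tendsto t atTop (𝓝 0))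
    {yk : ℕ → Euc n} (hyk : ∀ k, IsVISol A K (u + t k • h) (yk k))
    {L : Euc n} (hwlim : Tendsto (fun k => (t k)⁻¹ • (yk k - ybar)) atTop (𝓝 L)) :
    L ∈ Kcone A K u ybar ∧
      ∀ z ∈ Kcone A K u ybar, ff A K ybar h L ≤ ff A K ybar h z := by
  set w : ℕ → Euc n := fun k => (t k)⁻¹ • (yk k - ybar) with hw_def
  have hyw : ∀ k, yk k = ybar + t k • w k := by
    intro k
    rw [hw_def]
    simp only []
    rw [smul_inv_smul₀ (ht0 k).ne', add_sub_cancel]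
  -- the function ψ
  set ψ : ℕ → Euc n → ℝ :=
    fun k x => (1 / 2) * ⟪x, A x⟫ - ⟪h, x⟫ + rr K ybar (t k) x with hψ_def
  set γ : Euc n → ℝ := fun x => dirRHS K ybar x + ⟪A ybar, x⟫ - ⟪u, x⟫ with hγ_def
  have hγ_nonneg : ∀ x, 0 ≤ γ x := by
    intro x
    have := dirRHS_ge hVI x
    rw [hγ_def]
    simp only []
    linarith
  have claim : ∀ z ∈ Kcone A K u ybar, ff A K ybar h L ≤ ff A K ybar h z ∧ γ L ≤ 0 := by
    intro z hz
    have hγz : γ z ≤ 0 := by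
      have hz' : ⟪u - A ybar, z⟫ ≥ dirRHS K ybar z := hz
      rw [inner_sub_left] at hz'
      rw [hγ_def]; simp only []; linarith
    -- eventual smallness
    have hKjlim : ∀ j : Fin m, Tendsto (fun k => K (w k) j) atTop (𝓝 (K L j)) :=
      fun j => ((Kj_cont K j).tendsto L).comp hwlim
    have hsmw : ∀ᶠ k in atTop, ∀ j, K ybar j ≠ 0 → t k * ‖K (w k) j‖ < ‖K ybar j‖ := by
      rw [Filter.eventually_all]
      intro j
      by_cases hj : K ybar j ≠ 0
      · have hlim : Tendsto (fun k => t k * ‖K (w k) j‖) atTop (𝓝 0) := by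
          have h0 := htlim.mul ((continuous_norm.tendsto _).comp (hKjlim j))
          rwa [zero_mul] at h0
        filter_upwards [hlim.eventually_lt_const (norm_pos_iff.mpr hj)] with k hk
        exact fun _ => hk
      · filter_upwards with k hcon; exact absurd hcon hj
    have hsmz : ∀ᶠ k in atTop, ∀ j, K ybar j ≠ 0 → t k * ‖K z j‖ < ‖K ybar j‖ := by
      rw [Filter.eventually_all]
      intro j
      by_cases hj : K ybar j ≠ 0
      · have hlim : Tendsto (fun k => t k * ‖K z j‖) atTop (𝓝 0) := by
          have h0 := htlim.mul_const ‖K z j‖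
          rwa [zero_mul] at h0
        filter_upwards [hlim.eventually_lt_const (norm_pos_iff.mpr hj)] with k hk
        exact fun _ => hk
      · filter_upwards with k hcon; exact absurd hcon hj
    -- eventual inequalities
    have hineq : ∀ᶠ k in atTop,
        ψ k (w k) ≤ ψ k z ∧ γ (w k) ≤ t k * (ψ k z - ψ k (w k)) := by
      filter_upwards [hsmw, hsmz] with k hkw hkz
      have hE : EE K A (u + t k • h) (yk k) ≤ EE K A (u + t k • h) (ybar + t k • z) :=
        energy_min K A hAsymm hApos _ _ (hyk k) _
      rw [hyw k] at hE
      have hEw := EE_expand hAsymm ybar u h (ht0 k) (w k) hkw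
      have hEz := EE_expand hAsymm ybar u h (ht0 k) z hkz
      have hkey : t k * γ (w k) + (t k) ^ 2 * ψ k (w k)
          ≤ t k * γ z + (t k) ^ 2 * ψ k z := by
        rw [hγ_def, hψ_def]; simp only []
        nlinarith [hE, hEw, hEz]
      have htk := ht0 k
      have h1 : (t k) ^ 2 * ψ k (w k) ≤ (t k) ^ 2 * ψ k z := by
        nlinarith [mul_nonneg htk.le (hγ_nonneg (w k)), mul_nonpos_of_nonneg_of_nonpos htk.le hγz]
      constructor
      · have hsq : (0:ℝ) < (t k) ^ 2 := by positivity
        exact le_of_mul_le_mul_left (by linarith [h1]) hsq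
      · have h2 : t k * γ (w k) ≤ (t k) ^ 2 * (ψ k z - ψ k (w k)) := by nlinarith
        have h2' : t k * γ (w k) ≤ t k * (t k * (ψ k z - ψ k (w k))) := by nlinarith
        exact le_of_mul_le_mul_left h2' htk
    -- limits
    have hAcont : Continuous fun x : Euc n => ⟪x, A x⟫ :=
      continuous_id.inner A.continuous_of_finiteDimensional
    have hψw : Tendsto (fun k => ψ k (w k)) atTop (𝓝 (ff A K ybar h L)) := by
      rw [hψ_def]
      unfold ff
      have hr : Tendsto (fun k => rr K ybar (t k) (w k)) atTop (𝓝 (QQ K ybar L)) := by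
        have := rr_tendsto K ybar htlim hwlim
        rwa [rr_zero] at this
      refine Filter.Tendsto.add (Filter.Tendsto.sub ?_ ?_) hr
      · exact (((hAcont.tendsto _).comp hwlim).const_mul _)
      · exact ((continuous_const.inner continuous_id).tendsto _).comp hwlim
    have hψz : Tendsto (fun k => ψ k z) atTop (𝓝 (ff A K ybar h z)) := by
      rw [hψ_def]
      unfold ff
      have hr : Tendsto (fun k => rr K ybar (t k) z) atTop (𝓝 (QQ K ybar z)) := by
        have := rr_tendsto K ybar htlim (tendsto_const_nhds (x := z))
        rwa [rr_zero] at this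
      exact tendsto_const_nhds.add hr
    have hγw : Tendsto (fun k => γ (w k)) atTop (𝓝 (γ L)) := by
      rw [hγ_def]
      refine Filter.Tendsto.sub (Filter.Tendsto.add ?_ ?_) ?_
      · exact ((dirRHS_cont K ybar).tendsto _).comp hwlim
      · exact ((continuous_const.inner continuous_id).tendsto _).comp hwlim
      · exact ((continuous_const.inner continuous_id).tendsto _).comp hwlim
    constructor
    · exact le_of_tendsto_of_tendsto hψw hψz (hineq.mono fun k hk => hk.1)
    · have hz0 : Tendsto (fun k => t k * (ψ k z - ψ k (w k))) atTop (𝓝 0) := by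
        have h0 := htlim.mul (hψz.sub hψw)
        rwa [zero_mul] at h0
      exact le_of_tendsto_of_tendsto hγw hz0 (hineq.mono fun k hk => hk.2)
  constructor
  · have h0 := (claim 0 (Kcone_zero A K u ybar)).2
    have : ⟪u - A ybar, L⟫ ≥ dirRHS K ybar L := by
      rw [inner_sub_left]
      rw [hγ_def] at h0; simp only [] at h0
      linarith
    exact this
  · exact fun z hz => (claim z hz).1

end Stmt19Aux
namespace Stmt19Aux
open Filter Topology

variable {n m d : ℕ}

lemma main_tendsto {A : Euc n →ₗ[ℝ] Euc n} {K : Euc n →ₗ[ℝ] Rows m d}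
    (hAsymm : ∀ x z : Euc n, ⟪A x, z⟫ = ⟪x, A z⟫)
    (hApos : ∀ x : Euc n, x ≠ 0 → 0 < ⟪x, A x⟫)
    {S : Euc n → Euc n} (hS : ∀ u' : Euc n, IsVISol A K u' (S u'))
    (u : Euc n) (h v : Euc n)
    (hv : v ∈ Kcone A K u (S u))
    (hmin : ∀ z ∈ Kcone A K u (S u),
      ff A K (S u) h v + (1 / 2) * ⟪z - v, A (z - v)⟫ ≤ ff A K (S u) h z) :
    Tendsto (fun s : ℝ => s⁻¹ • (S (u + s • h) - S u)) (𝓝[>] (0:ℝ)) (𝓝 v) := by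
  obtain ⟨α, hα, hcoer⟩ := exists_alpha A hApos
  set ybar := S u with hybar
  -- uniform bound on difference quotients
  have hbound : ∀ s : ℝ, 0 < s → ‖s⁻¹ • (S (u + s • h) - ybar)‖ ≤ α⁻¹ * ‖h‖ := by
    intro s hs
    have hl := lipschitz K A hα hcoer (u + s • h) u (S (u + s • h)) ybar (hS _) (hS u)
    rw [add_sub_cancel_left, norm_smul, Real.norm_eq_abs, abs_of_pos hs] at hl
    rw [norm_smul, Real.norm_eq_abs, abs_of_pos (inv_pos.mpr hs)]
    calc s⁻¹ * ‖S (u + s • h) - ybar‖ ≤ s⁻¹ * (α⁻¹ * (s * ‖h‖)) := by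
          exact mul_le_mul_of_nonneg_left hl (inv_pos.mpr hs).le
    _ = α⁻¹ * ‖h‖ := by field_simp
  by_contra hcon
  rw [Metric.tendsto_nhdsWithin_nhds] at hcon
  push_neg at hcon
  obtain ⟨ε, hε, hbad⟩ := hcon
  have H : ∀ k : ℕ, ∃ s : ℝ, s ∈ Set.Ioi (0:ℝ) ∧ dist s 0 < 1 / (k + 1) ∧
      ε ≤ dist (s⁻¹ • (S (u + s • h) - ybar)) v := by
    intro k
    obtain ⟨s, hs1, hs2, hs3⟩ := hbad (1 / (k + 1)) (by positivity)
    exact ⟨s, hs1, hs2, hs3⟩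
  choose T hT1 hT2 hT3 using H
  have hTpos : ∀ k, 0 < T k := fun k => hT1 k
  have hTlim : Tendsto T atTop (𝓝 0) := by
    have hub : ∀ k : ℕ, T k ≤ 1 / (k + 1) := by
      intro k
      have := hT2 k
      rw [Real.dist_eq, sub_zero, abs_of_pos (hTpos k)] at this
      exact this.le
    exact squeeze_zero (fun k => (hTpos k).le) hub tendsto_one_div_add_atTop_nhds_zero_nat
  set W : ℕ → Euc n := fun k => (T k)⁻¹ • (S (u + T k • h) - ybar) with hW_def
  have hWmem : ∀ k, W k ∈ Metric.closedBall (0 : Euc n) (α⁻¹ * ‖h‖) := by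
    intro k
    rw [Metric.mem_closedBall, dist_zero_right]
    exact hbound (T k) (hTpos k)
  obtain ⟨L, _, φ, hφmono, hφlim⟩ :=
    tendsto_subseq_of_bounded Metric.isBounded_closedBall hWmem
  have hcore := core hAsymm hApos (hS u) h (t := T ∘ φ)
    (fun k => hTpos (φ k)) (hTlim.comp hφmono.tendsto_atTop)
    (yk := fun k => S (u + T (φ k) • h)) (fun k => hS _) (L := L) hφlim
  obtain ⟨hLmem, hLmin⟩ := hcore
  -- identify L = v
  have h1 : ff A K ybar h L ≤ ff A K ybar h v := hLmin v hv
  have h2 : ff A K ybar h v + (1 / 2) * ⟪L - v, A (L - v)⟫ ≤ ff A K ybar h L :=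
    hmin L hLmem
  have h3 : ⟪L - v, A (L - v)⟫ ≤ 0 := by linarith
  have hLv : L = v := by
    by_contra hne
    have : L - v ≠ 0 := sub_ne_zero_of_ne hne
    linarith [hApos _ this]
  -- contradiction with ε
  have hdist : Tendsto (fun k => dist (W (φ k)) v) atTop (𝓝 (dist L v)) :=
    (Continuous.tendsto (continuous_id.dist continuous_const) L).comp hφlim
  rw [hLv, dist_self] at hdist
  have : ε ≤ 0 := ge_of_tendsto hdist (Filter.Eventually.of_forall fun k => hT3 (φ k))
  linarith

end Stmt19Aux
namespace Stmt19Aux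
open Filter Topology

variable {n m d : ℕ}

lemma gradient_inner (f : Euc n → ℝ) (x : Euc n) (f' : Euc n →L[ℝ] ℝ)
    (hf : HasFDerivAt f f' x) (w : Euc n) :
    ⟪gradient f x, w⟫ = f' w := by
  have hg : HasGradientAt f ((InnerProductSpace.toDual ℝ (Euc n)).symm f') x := by
    rw [hasGradientAt_iff_hasFDerivAt]
    rwa [LinearIsometryEquiv.apply_symm_apply]
  rw [hg.gradient]
  exact InnerProductSpace.toDual_symm_apply

lemma bstat {A : Euc n →ₗ[ℝ] Euc n} {K : Euc n →ₗ[ℝ] Rows m d}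
    (hAsymm : ∀ x z : Euc n, ⟪A x, z⟫ = ⟪x, A z⟫)
    (hApos : ∀ x : Euc n, x ≠ 0 → 0 < ⟪x, A x⟫)
    {S : Euc n → Euc n} (hS : ∀ u' : Euc n, IsVISol A K u' (S u'))
    {J : Euc n → Euc n → ℝ} (hJ : ContDiff ℝ 1 (fun p : Euc n × Euc n => J p.1 p.2))
    {ubar : Euc n}
    (hloc : ∃ ε : ℝ, 0 < ε ∧ ∀ u : Euc n, ‖u - ubar‖ < ε → J (S ubar) ubar ≤ J (S u) u)
    (h v : Euc n) (hv : v ∈ Kcone A K ubar (S ubar))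
    (hmin : ∀ z ∈ Kcone A K ubar (S ubar),
      ff A K (S ubar) h v + (1 / 2) * ⟪z - v, A (z - v)⟫ ≤ ff A K (S ubar) h z) :
    0 ≤ ⟪gradient (fun y => J y ubar) (S ubar), v⟫
      + ⟪gradient (fun w => J (S ubar) w) ubar, h⟫ := by
  set JJ : Euc n × Euc n → ℝ := fun p => J p.1 p.2 with hJJ
  have hJd : DifferentiableAt ℝ JJ (S ubar, ubar) :=
    (hJ.differentiable one_ne_zero).differentiableAt
  set D := fderiv ℝ JJ (S ubar, ubar) with hD_def
  have hD : HasFDerivAt JJ D (S ubar, ubar) := hJd.hasFDerivAt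
  -- curve
  set c : ℝ → Euc n × Euc n := fun s => (S (ubar + s • h), ubar + s • h) with hc_def
  have hc0 : c 0 = (S ubar, ubar) := by simp [hc_def]
  -- slope of the curve
  have hdq : Tendsto (fun s : ℝ => s⁻¹ • (S (ubar + s • h) - S ubar)) (𝓝[>] (0:ℝ)) (𝓝 v) :=
    main_tendsto hAsymm hApos hS ubar h v hv hmin
  have hslope : HasDerivWithinAt c (v, h) (Set.Ioi (0:ℝ)) 0 := by
    rw [hasDerivWithinAt_iff_tendsto_slope' (by simp : (0:ℝ) ∉ Set.Ioi (0:ℝ))]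
    have hsnd : Tendsto (fun s : ℝ => s⁻¹ • ((ubar + s • h) - ubar)) (𝓝[>] (0:ℝ)) (𝓝 h) := by
      apply Tendsto.congr' (f₁ := fun _ => h)
      · filter_upwards [self_mem_nhdsWithin] with s hs
        have hs' : (s:ℝ) ≠ 0 := ne_of_gt hs
        rw [add_sub_cancel_left, smul_smul, inv_mul_cancel₀ hs', one_smul]
      · exact tendsto_const_nhds
    have hprod := hdq.prodMk_nhds hsnd
    apply Tendsto.congr' (f₁ := fun s : ℝ =>
      ((s⁻¹ • (S (ubar + s • h) - S ubar)), s⁻¹ • ((ubar + s • h) - ubar)))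
    · filter_upwards with s
      rw [slope_def_module, hc0]
      simp only [hc_def, sub_zero, Prod.mk_sub_mk, Prod.smul_mk]
    · exact hprod
  have hD0 : HasFDerivAt JJ D (c 0) := by rw [hc0]; exact hD
  have hcomp : HasDerivWithinAt (JJ ∘ c) (D (v, h)) (Set.Ioi (0:ℝ)) 0 :=
    hD0.comp_hasDerivWithinAt 0 hslope
  -- nonnegativity of the directional derivative
  obtain ⟨ε₀, hε₀, hJmin⟩ := hloc
  have hDnonneg : 0 ≤ D (v, h) := by
    rw [hasDerivWithinAt_iff_tendsto_slope' (by simp : (0:ℝ) ∉ Set.Ioi (0:ℝ))] at hcomp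
    refine ge_of_tendsto hcomp ?_
    have hev : ∀ᶠ s : ℝ in 𝓝[>] 0, ‖(ubar + s • h) - ubar‖ < ε₀ := by
      have h1 : Tendsto (fun s : ℝ => ‖(ubar + s • h) - ubar‖) (𝓝[>] 0) (𝓝 0) := by
        have : Tendsto (fun s : ℝ => s • h) (𝓝[>] (0:ℝ)) (𝓝 0) := by
          have hcont : Continuous fun s : ℝ => s • h := continuous_id.smul continuous_const
          have h0 : Tendsto (fun s : ℝ => s • h) (𝓝 (0:ℝ)) (𝓝 0) := by
            simpa using hcont.tendsto (0:ℝ)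
          exact h0.mono_left nhdsWithin_le_nhds
        have h2 := (continuous_norm.tendsto (0 : Euc n)).comp this
        rw [norm_zero] at h2
        simpa [add_sub_cancel_left, Function.comp_def] using h2
      exact h1.eventually_lt_const hε₀
    filter_upwards [hev, self_mem_nhdsWithin] with s hs hs0
    have hs0' : (0:ℝ) < s := hs0
    have hJs : J (S ubar) ubar ≤ J (S (ubar + s • h)) (ubar + s • h) := hJmin _ hs
    rw [slope_def_module, sub_zero, smul_eq_mul]
    have h00 : (JJ ∘ c) 0 = J (S ubar) ubar := by simp [hJJ, hc_def]
    have hss : (JJ ∘ c) s = J (S (ubar + s • h)) (ubar + s • h) := rfl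
    rw [h00, hss]
    have hge : (0:ℝ) ≤ J (S (ubar + s • h)) (ubar + s • h) - J (S ubar) ubar := by linarith
    exact mul_nonneg (by positivity) hge
  -- identify D (v, h) with the partial gradients
  have hgy : ⟪gradient (fun y => J y ubar) (S ubar), v⟫
      = D (v, 0) := by
    have hincl : HasFDerivAt (fun y : Euc n => (y, ubar))
        ((ContinuousLinearMap.id ℝ (Euc n)).prod 0) (S ubar) :=
      (hasFDerivAt_id _).prodMk (hasFDerivAt_const _ _)
    have hcompy : HasFDerivAt (fun y : Euc n => J y ubar)
        (D.comp ((ContinuousLinearMap.id ℝ (Euc n)).prod 0)) (S ubar) :=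
      by have := hD.comp (S ubar) hincl; exact this
    rw [gradient_inner _ _ _ hcompy v]
    rfl
  have hgu : ⟪gradient (fun w => J (S ubar) w) ubar, h⟫
      = D (0, h) := by
    have hincl : HasFDerivAt (fun w : Euc n => ((S ubar), w))
        ((0 : Euc n →L[ℝ] Euc n).prod (ContinuousLinearMap.id ℝ (Euc n))) ubar :=
      (hasFDerivAt_const _ _).prodMk (hasFDerivAt_id _)
    have hcompu : HasFDerivAt (fun w : Euc n => J (S ubar) w)
        (D.comp ((0 : Euc n →L[ℝ] Euc n).prod (ContinuousLinearMap.id ℝ (Euc n)))) ubar :=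
      by have := hD.comp ubar hincl; exact this
    rw [gradient_inner _ _ _ hcompu h]
    rfl
  rw [hgy, hgu]
  have hsum : D (v, 0) + D (0, h) = D (v, h) := by
    rw [← map_add]
    congr 1
    simp [Prod.ext_iff]
  linarith [hDnonneg, hsum]

end Stmt19Aux
namespace Stmt19Aux
open Filter Topology

variable {n m d : ℕ}

lemma uu_add (a b c : V d) : uu a (b + c) = uu a b + uu a c := by
  rw [uu, uu, uu, inner_add_right]; ring

lemma uu_smul (a : V d) (t : ℝ) (b : V d) : uu a (t • b) = t * uu a b := by
  rw [uu, uu, inner_smul_right]; ring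

lemma K_add_apply (K : Euc n →ₗ[ℝ] Rows m d) (x z : Euc n) (j : Fin m) :
    K (x + z) j = K x j + K z j := by simp [map_add]

lemma K_smul_apply (K : Euc n →ₗ[ℝ] Rows m d) (t : ℝ) (x : Euc n) (j : Fin m) :
    K (t • x) j = t • K x j := by simp [map_smul]

lemma dirRHS_add (K : Euc n →ₗ[ℝ] Rows m d) (y x z : Euc n) :
    dirRHS K y (x + z) ≤ dirRHS K y x + dirRHS K y z := by
  rw [dirRHS_eq, dirRHS_eq, dirRHS_eq, ← Finset.sum_add_distrib]
  refine Finset.sum_le_sum fun j _ => ?_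
  by_cases h : K y j ≠ 0
  · simp only [if_pos h, K_add_apply, uu_add]
    exact le_refl _
  · simp only [if_neg h, K_add_apply]
    exact norm_add_le _ _

lemma dirRHS_smul (K : Euc n →ₗ[ℝ] Rows m d) (y : Euc n) {t : ℝ} (ht : 0 ≤ t) (x : Euc n) :
    dirRHS K y (t • x) = t * dirRHS K y x := by
  rw [dirRHS_eq, dirRHS_eq, Finset.mul_sum]
  refine Finset.sum_congr rfl fun j _ => ?_
  by_cases h : K y j ≠ 0
  · simp only [if_pos h, K_smul_apply, uu_smul]
  · simp only [if_neg h, K_smul_apply, norm_smul, Real.norm_eq_abs, abs_of_nonneg ht]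

lemma Kcone_add {A : Euc n →ₗ[ℝ] Euc n} {K : Euc n →ₗ[ℝ] Rows m d} {u y : Euc n}
    {x z : Euc n} (hx : x ∈ Kcone A K u y) (hz : z ∈ Kcone A K u y) :
    x + z ∈ Kcone A K u y := by
  have hx' : ⟪u - A y, x⟫ ≥ dirRHS K y x := hx
  have hz' : ⟪u - A y, z⟫ ≥ dirRHS K y z := hz
  have : ⟪u - A y, x + z⟫ ≥ dirRHS K y (x + z) := by
    rw [inner_add_right]
    calc dirRHS K y (x + z) ≤ dirRHS K y x + dirRHS K y z := dirRHS_add K y x z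
    _ ≤ ⟪u - A y, x⟫ + ⟪u - A y, z⟫ := by linarith
  exact this

lemma Kcone_smul {A : Euc n →ₗ[ℝ] Euc n} {K : Euc n →ₗ[ℝ] Rows m d} {u y : Euc n}
    {t : ℝ} (ht : 0 ≤ t) {x : Euc n} (hx : x ∈ Kcone A K u y) :
    t • x ∈ Kcone A K u y := by
  have hx' : ⟪u - A y, x⟫ ≥ dirRHS K y x := hx
  have : ⟪u - A y, t • x⟫ ≥ dirRHS K y (t • x) := by
    rw [inner_smul_right, dirRHS_smul K y ht]
    exact mul_le_mul_of_nonneg_left hx' ht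
  exact this

lemma Kcone_convex (A : Euc n →ₗ[ℝ] Euc n) (K : Euc n →ₗ[ℝ] Rows m d) (u y : Euc n) :
    Convex ℝ (Kcone A K u y) := by
  intro x hx z hz a b ha hb hab
  exact Kcone_add (Kcone_smul ha hx) (Kcone_smul hb hz)

lemma Kcone_closed (A : Euc n →ₗ[ℝ] Euc n) (K : Euc n →ₗ[ℝ] Rows m d) (u y : Euc n) :
    IsClosed (Kcone A K u y) := by
  have : Kcone A K u y = {v | dirRHS K y v - ⟪u - A y, v⟫ ≤ 0} := by
    ext v; simp only [Kcone, Set.mem_setOf_eq]; constructor <;> intro hh <;> linarith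
  rw [this]
  have hcont : Continuous fun v : Euc n => dirRHS K y v - ⟪u - A y, v⟫ :=
    (dirRHS_cont K y).sub (continuous_const.inner continuous_id)
  exact isClosed_le hcont continuous_const

lemma proj_decomp (A : Euc n →ₗ[ℝ] Euc n) (K : Euc n →ₗ[ℝ] Rows m d) (u y : Euc n)
    (p : Euc n) :
    ∃ p' ∈ Kcone A K u y, (∀ z ∈ Kcone A K u y, ⟪p - p', z⟫ ≤ 0) ∧ ⟪p - p', p'⟫ = 0 := by
  obtain ⟨p', hp'mem, hp'⟩ := exists_norm_eq_iInf_of_complete_convex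
    ⟨0, Kcone_zero A K u y⟩ ((Kcone_closed A K u y).isComplete)
    (Kcone_convex A K u y) p
  have hchar := (norm_eq_iInf_iff_real_inner_le_zero (Kcone_convex A K u y) hp'mem).mp hp'
  have h2p : ⟪p - p', p'⟫ ≤ 0 := by
    have h2 : (2:ℝ) • p' ∈ Kcone A K u y := Kcone_smul (by norm_num) hp'mem
    have := hchar _ h2
    have he : (2:ℝ) • p' - p' = p' := by
      rw [two_smul]; abel
    rwa [he] at this
  have h0p : 0 ≤ ⟪p - p', p'⟫ := by
    have := hchar _ (Kcone_zero A K u y)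
    rw [zero_sub, inner_neg_right] at this
    linarith
  have heq : ⟪p - p', p'⟫ = 0 := le_antisymm h2p (by linarith)
  refine ⟨p', hp'mem, fun z hz => ?_, heq⟩
  have hzp : z + p' ∈ Kcone A K u y := Kcone_add hz hp'mem
  have := hchar _ hzp
  rw [add_sub_cancel_right] at this
  exact this

lemma QQ_zero (K : Euc n →ₗ[ℝ] Rows m d) (y : Euc n) : QQ K y 0 = 0 := by
  unfold QQ BB
  have : ∀ j : Fin m, (if K y j ≠ 0 then Brow (K y j) (K 0 j) (K 0 j) else 0) = 0 := by
    intro j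
    by_cases h : K y j ≠ 0
    · simp only [if_pos h]
      have h0 : K (0 : Euc n) j = 0 := by simp [map_zero]
      rw [h0, Brow, uu]
      simp
    · simp only [if_neg h]
  rw [Finset.sum_eq_zero fun j _ => this j]
  norm_num

end Stmt19Aux
namespace Stmt19Aux
open Filter Topology

variable {n m d : ℕ}

def NN (K : Euc n →ₗ[ℝ] Rows m d) (y : Euc n) (B : Rows m d) : ℝ :=
  ∑ j, if K y j ≠ 0 then uu (K y j) (B j) else ‖B j‖

lemma NN_K (K : Euc n →ₗ[ℝ] Rows m d) (y w : Euc n) : NN K y (K w) = dirRHS K y w := by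
  rw [dirRHS_eq]; rfl

lemma NN_add (K : Euc n →ₗ[ℝ] Rows m d) (y : Euc n) (B C : Rows m d) :
    NN K y (B + C) ≤ NN K y B + NN K y C := by
  unfold NN
  rw [← Finset.sum_add_distrib]
  refine Finset.sum_le_sum fun j _ => ?_
  have hBC : (B + C) j = B j + C j := rfl
  by_cases h : K y j ≠ 0
  · simp only [if_pos h, hBC, uu_add]; exact le_refl _
  · simp only [if_neg h, hBC]; exact norm_add_le _ _

lemma NN_smul (K : Euc n →ₗ[ℝ] Rows m d) (y : Euc n) {c : ℝ} (hc : 0 < c) (B : Rows m d) :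
    NN K y (c • B) = c * NN K y B := by
  unfold NN
  rw [Finset.mul_sum]
  refine Finset.sum_congr rfl fun j _ => ?_
  have hcB : (c • B) j = c • B j := rfl
  by_cases h : K y j ≠ 0
  · simp only [if_pos h, hcB, uu_smul]
  · simp only [if_neg h, hcB, norm_smul, Real.norm_eq_abs, abs_of_pos hc]

def single_row (j : Fin m) (b : V d) : Rows m d :=
  (WithLp.equiv 2 _).symm (Pi.single j b)

lemma inner_single_row (q : Rows m d) (j : Fin m) (b : V d) :
    ⟪q, single_row j b⟫ = ⟪q j, b⟫ := by
  rw [PiLp.inner_apply, Finset.sum_eq_single j]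
  · simp [single_row]
  · intro i _ hij
    have : single_row j b i = 0 := by simp [single_row, Pi.single_eq_of_ne hij, hij]
    rw [this, inner_zero_right]
  · simp

lemma NN_single_row (K : Euc n →ₗ[ℝ] Rows m d) (y : Euc n) (j : Fin m) (b : V d) :
    NN K y (single_row j b) = if K y j ≠ 0 then uu (K y j) b else ‖b‖ := by
  unfold NN
  rw [Finset.sum_eq_single j]
  · have : single_row j b j = b := by simp [single_row]
    rw [this]
  · intro i _ hij
    have h0 : single_row j b i = 0 := by simp [single_row, Pi.single_eq_of_ne hij, hij]
    rw [h0]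
    by_cases h : K y i ≠ 0
    · simp [h, uu]
    · simp [h]
  · simp

lemma exists_slack {A : Euc n →ₗ[ℝ] Euc n} {K : Euc n →ₗ[ℝ] Rows m d}
    (hK : Function.Injective K) {u ybar : Euc n} (hVI : IsVISol A K u ybar) :
    ∃ q : Rows m d, (A ybar + (LinearMap.adjoint K) q = u) ∧
      (∀ j, ⟪q j, K ybar j⟫ = ‖K ybar j‖) ∧ (∀ j, ‖q j‖ ≤ 1) := by
  set e : Euc n →ₗ[ℝ] ℝ :=
    { toFun := fun x => ⟪u - A ybar, x⟫
      map_add' := fun x z => inner_add_right _ _ _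
      map_smul' := fun c x => by
        simp only [RingHom.id_apply, smul_eq_mul]
        exact real_inner_smul_right _ _ _ } with he_def
  set Keq := LinearEquiv.ofInjective K hK with hKeq
  set fP : (Rows m d) →ₗ.[ℝ] ℝ :=
    ⟨LinearMap.range K, e.comp ((Keq.symm : (LinearMap.range K) ≃ₗ[ℝ] Euc n) :
      (LinearMap.range K) →ₗ[ℝ] Euc n)⟩ with hfP
  have hdom : ∀ x : fP.domain, fP x ≤ NN K ybar x := by
    rintro ⟨B, hB⟩
    obtain ⟨w, hw⟩ := hB
    have hxeq : (⟨B, ⟨w, hw⟩⟩ : fP.domain) = Keq w := by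
      apply Subtype.ext
      rw [hKeq]
      simp [LinearEquiv.ofInjective_apply, hw]
    have hfval : fP ⟨B, ⟨w, hw⟩⟩ = ⟪u - A ybar, w⟫ := by
      rw [hxeq]
      show e (Keq.symm (Keq w)) = _
      rw [LinearEquiv.symm_apply_apply]
      rfl
    have hNval : NN K ybar B = dirRHS K ybar w := by rw [← hw]; exact NN_K K ybar w
    have hle : ⟪u - A ybar, w⟫ ≤ dirRHS K ybar w := by
      have := dirRHS_ge hVI w
      rw [inner_sub_left]
      linarith
    calc fP ⟨B, ⟨w, hw⟩⟩ = ⟪u - A ybar, w⟫ := hfval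
    _ ≤ dirRHS K ybar w := hle
    _ = NN K ybar B := hNval.symm
  obtain ⟨g, hg_ext, hg_le⟩ := exists_extension_of_le_sublinear fP (NN K ybar)
    (fun c hc B => NN_smul K ybar hc B) (NN_add K ybar) hdom
  haveI : ContinuousSMul ℝ (Rows m d) := inferInstance
  set q : Rows m d :=
    (InnerProductSpace.toDual ℝ (Rows m d)).symm (LinearMap.toContinuousLinearMap g)
    with hq_def
  have hq : ∀ B : Rows m d, ⟪q, B⟫ = g B := by
    intro B
    rw [hq_def]
    exact InnerProductSpace.toDual_symm_apply
  -- row properties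
  have hrow : ∀ (j : Fin m) (b : V d), ⟪q j, b⟫ ≤ if K ybar j ≠ 0 then uu (K ybar j) b else ‖b‖ := by
    intro j b
    rw [← NN_single_row K ybar j b, ← inner_single_row q j b]
    rw [hq]
    exact hg_le _
  have hrow_act : ∀ j : Fin m, K ybar j ≠ 0 → q j = ‖K ybar j‖⁻¹ • K ybar j := by
    intro j hj
    set a := K ybar j with ha_def
    have hsub : ∀ b : V d, ⟪q j - ‖a‖⁻¹ • a, b⟫ ≤ 0 := by
      intro b
      have h1 := hrow j b
      rw [if_pos hj] at h1
      rw [inner_sub_left, real_inner_smul_left]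
      rw [uu] at h1
      linarith
    have := hsub (q j - ‖a‖⁻¹ • a)
    rw [real_inner_self_eq_norm_sq] at this
    have hz : ‖q j - ‖a‖⁻¹ • a‖ = 0 := by nlinarith [norm_nonneg (q j - ‖a‖⁻¹ • a)]
    have := norm_eq_zero.mp hz
    rw [sub_eq_zero] at this
    exact this
  refine ⟨q, ?_, ?_, ?_⟩
  · -- adjoint identity
    have hadj : (LinearMap.adjoint K) q = u - A ybar := by
      apply ext_inner_right ℝ
      intro w
      rw [LinearMap.adjoint_inner_left]
      have hmem : K w ∈ LinearMap.range K := ⟨w, rfl⟩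
      have hext := hg_ext ⟨K w, hmem⟩
      have hfval : fP ⟨K w, hmem⟩ = ⟪u - A ybar, w⟫ := by
        have hxeq : (⟨K w, hmem⟩ : fP.domain) = Keq w := by
          apply Subtype.ext
          rw [hKeq]
          simp [LinearEquiv.ofInjective_apply]
        rw [hxeq]
        show e (Keq.symm (Keq w)) = _
        rw [LinearEquiv.symm_apply_apply]
        rfl
      rw [hq, hext, hfval]
    rw [hadj]
    abel
  · intro j
    by_cases hj : K ybar j ≠ 0
    · rw [hrow_act j hj, real_inner_smul_left, real_inner_self_eq_norm_sq]
      have : (0:ℝ) < ‖K ybar j‖ := norm_pos_iff.mpr hj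
      field_simp
    · rw [not_not] at hj
      rw [hj, inner_zero_right, norm_zero]
  · intro j
    by_cases hj : K ybar j ≠ 0
    · rw [hrow_act j hj, norm_smul, Real.norm_eq_abs]
      have : (0:ℝ) < ‖K ybar j‖ := norm_pos_iff.mpr hj
      rw [abs_of_pos (inv_pos.mpr this), inv_mul_cancel₀ this.ne']
    · have h1 := hrow j (q j)
      rw [if_neg hj, real_inner_self_eq_norm_sq] at h1
      nlinarith [norm_nonneg (q j)]

end Stmt19Aux
namespace Stmt19Aux
open Filter Topology

variable {n m d : ℕ}

lemma Brow_sub_right (a b c c' : V d) : Brow a b (c - c') = Brow a b c - Brow a b c' := by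
  have h1 : uu a (c - c') = uu a c - uu a c' := by
    rw [uu, uu, uu, inner_sub_right]; ring
  rw [Brow, Brow, Brow, h1, inner_sub_right]; ring

lemma BB_sub_right (K : Euc n →ₗ[ℝ] Rows m d) (y x z v : Euc n) :
    BB K y x (z - v) = BB K y x z - BB K y x v := by
  unfold BB
  rw [← Finset.sum_sub_distrib]
  refine Finset.sum_congr rfl fun j _ => ?_
  by_cases h : K y j ≠ 0
  · simp only [if_pos h, K_sub_apply, Brow_sub_right]
  · simp only [if_neg h]; ring

def Mrow (K : Euc n →ₗ[ℝ] Rows m d) (y x : Euc n) : Rows m d :=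
  (WithLp.equiv 2 _).symm (fun j =>
    if K y j ≠ 0 then
      (‖K y j‖)⁻¹ • (K x j - ((⟪K y j, K x j⟫) / ‖K y j‖ ^ 2) • K y j)
    else 0)

def Qhat (K : Euc n →ₗ[ℝ] Rows m d) (y x : Euc n) : Euc n :=
  (LinearMap.adjoint K) (Mrow K y x)

lemma Qhat_inner (K : Euc n →ₗ[ℝ] Rows m d) (y x v : Euc n) :
    ⟪Qhat K y x, v⟫ = BB K y x v := by
  rw [Qhat, LinearMap.adjoint_inner_left, PiLp.inner_apply]
  unfold BB
  refine Finset.sum_congr rfl fun j _ => ?_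
  have hMj : Mrow K y x j = if K y j ≠ 0 then
      (‖K y j‖)⁻¹ • (K x j - ((⟪K y j, K x j⟫) / ‖K y j‖ ^ 2) • K y j) else 0 := rfl
  rw [hMj]
  by_cases h : K y j ≠ 0
  · rw [if_pos h, if_pos h]
    exact Brow_stmt _ _ _ h
  · rw [if_neg h, if_neg h, inner_zero_left]

lemma stmt_sum (K : Euc n →ₗ[ℝ] Rows m d) (y p v : Euc n) :
    (∑ j, if K y j ≠ 0 then
        ⟪(‖K y j‖)⁻¹ • (K p j - ((⟪K y j, K p j⟫) / ‖K y j‖ ^ 2) • K y j), K v j⟫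
      else 0) = BB K y p v := by
  unfold BB
  refine Finset.sum_congr rfl fun j _ => ?_
  by_cases h : K y j ≠ 0
  · rw [if_pos h, if_pos h]
    exact Brow_stmt _ _ _ h
  · rw [if_neg h, if_neg h]

end Stmt19Aux
/-- strong stationarity system for an unconstrained local minimizer. -/
theorem stmt19 {n m d : ℕ} (A : Euc n →ₗ[ℝ] Euc n)
    (hAsymm : ∀ x z : Euc n, ⟪A x, z⟫ = ⟪x, A z⟫)
    (hApos : ∀ x : Euc n, x ≠ 0 → 0 < ⟪x, A x⟫)
    (K : Euc n →ₗ[ℝ] Rows m d) (hK : Function.Injective K)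
    (S : Euc n → Euc n) (hS : ∀ u' : Euc n, IsVISol A K u' (S u'))
    (J : Euc n → Euc n → ℝ) (hJ : ContDiff ℝ 1 (fun p : Euc n × Euc n => J p.1 p.2))
    (ubar : Euc n)
    (hmin : ∃ ε : ℝ, 0 < ε ∧ ∀ u : Euc n, ‖u - ubar‖ < ε →
      J (S ubar) ubar ≤ J (S u) u) :
    ∃ (q : Rows m d) (p μ : Euc n),
      A (S ubar) + (LinearMap.adjoint K) q = ubar ∧
      (∀ j, ⟪q j, K (S ubar) j⟫ = ‖K (S ubar) j‖) ∧
      (∀ j, ‖q j‖ ≤ 1) ∧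
      (∀ v : Euc n,
        ⟪A p, v⟫ + (∑ j, if K (S ubar) j ≠ 0 then
            ⟪(‖K (S ubar) j‖)⁻¹ •
              (K p j - ((⟪K (S ubar) j, K p j⟫) / ‖K (S ubar) j‖ ^ 2) • K (S ubar) j),
              K v j⟫
          else 0) =
        ⟪gradient (fun y => J y ubar) (S ubar) - μ, v⟫) ∧
      p ∈ Kcone A K ubar (S ubar) ∧
      (∀ φ ∈ Kcone A K ubar (S ubar), ⟪μ, φ⟫ ≥ 0) ∧
      p + gradient (fun w => J (S ubar) w) ubar = 0 := by
  classical
  have hVI : IsVISol A K ubar (S ubar) := hS ubar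
  obtain ⟨q, hq1, hq2, hq3⟩ := Stmt19Aux.exists_slack hK hVI
  set ybar : Euc n := S ubar with hybar
  set gy : Euc n := gradient (fun y => J y ubar) ybar with hgy_def
  set gu : Euc n := gradient (fun w => J ybar w) ubar with hgu_def
  set p : Euc n := -gu with hp_def
  set μ : Euc n := gy - A p - Stmt19Aux.Qhat K ybar p with hμ_def
  have hgup : gu = -p := by rw [hp_def, neg_neg]
  -- quadratic growth of ff for h = A v + Qhat v
  have hffmin : ∀ v : Euc n, ∀ z ∈ Kcone A K ubar ybar,
      Stmt19Aux.ff A K ybar (A v + Stmt19Aux.Qhat K ybar v) v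
        + (1 / 2) * ⟪z - v, A (z - v)⟫
      ≤ Stmt19Aux.ff A K ybar (A v + Stmt19Aux.Qhat K ybar v) z := by
    intro v z _
    unfold Stmt19Aux.ff
    have hAe := Stmt19Aux.inner_A_expand A hAsymm z v
    have hQq := Stmt19Aux.QQ_quad K ybar v z
    have hQn := Stmt19Aux.QQ_nonneg K ybar (z - v)
    have hBv : ⟪Stmt19Aux.Qhat K ybar v, v⟫ = Stmt19Aux.BB K ybar v v :=
      Stmt19Aux.Qhat_inner K ybar v v
    have hBz : ⟪Stmt19Aux.Qhat K ybar v, z⟫ = Stmt19Aux.BB K ybar v z :=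
      Stmt19Aux.Qhat_inner K ybar v z
    have hBsub := Stmt19Aux.BB_sub_right K ybar v z v
    have hiv : ⟪A v + Stmt19Aux.Qhat K ybar v, v⟫
        = ⟪A v, v⟫ + ⟪Stmt19Aux.Qhat K ybar v, v⟫ := inner_add_left _ _ _
    have hiz : ⟪A v + Stmt19Aux.Qhat K ybar v, z⟫
        = ⟪A v, z⟫ + ⟪Stmt19Aux.Qhat K ybar v, z⟫ := inner_add_left _ _ _
    have hAvzv : ⟪A v, z - v⟫ = ⟪A v, z⟫ - ⟪A v, v⟫ := inner_sub_right _ _ _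
    rw [hiv, hiz, hBv, hBz]
    nlinarith [hAe, hQq, hQn, hBsub, hAvzv]
  -- p belongs to the cone
  obtain ⟨p', hp'mem, hpolar, horth⟩ := Stmt19Aux.proj_decomp A K ubar ybar p
  have hpK : p ∈ Kcone A K ubar ybar := by
    set δ : Euc n := p - p' with hδ_def
    have hmin0 : ∀ z ∈ Kcone A K ubar ybar,
        Stmt19Aux.ff A K ybar δ 0 + (1 / 2) * ⟪z - 0, A (z - 0)⟫
        ≤ Stmt19Aux.ff A K ybar δ z := by
      intro z hz
      unfold Stmt19Aux.ff
      have h0 : Stmt19Aux.QQ K ybar (0 : Euc n) = 0 := Stmt19Aux.QQ_zero K ybar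
      have hδz : ⟪δ, z⟫ ≤ 0 := hpolar z hz
      have hQz := Stmt19Aux.QQ_nonneg K ybar z
      rw [sub_zero]
      simp only [inner_zero_right, map_zero, h0, mul_zero]
      linarith
    have hbs := Stmt19Aux.bstat hAsymm hApos hS hJ hmin δ 0
      (Stmt19Aux.Kcone_zero A K ubar ybar) hmin0
    rw [inner_zero_right] at hbs
    have hpδ : ⟪p, δ⟫ ≤ 0 := by
      have : ⟪gu, δ⟫ = -⟪p, δ⟫ := by rw [hgup, inner_neg_left]
      linarith [hbs, this.symm.le, this.le]
    have hδδ : ⟪δ, δ⟫ ≤ 0 := by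
      have hpd : p = δ + p' := by rw [hδ_def]; abel
      have he : ⟪p, δ⟫ = ⟪δ, δ⟫ + ⟪p', δ⟫ := by rw [hpd, inner_add_left]
      have hc : ⟪p', δ⟫ = ⟪δ, p'⟫ := real_inner_comm _ _
      rw [hc, horth] at he
      linarith
    have hδ0 : δ = 0 := by
      have hnn := real_inner_self_nonneg (x := δ)
      exact inner_self_eq_zero.mp (le_antisymm hδδ hnn)
    rw [hδ_def, sub_eq_zero] at hδ0
    rw [hδ0]
    exact hp'mem
  -- μ nonnegative on the cone
  have hμpos : ∀ φ ∈ Kcone A K ubar ybar, ⟪μ, φ⟫ ≥ 0 := by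
    intro v hv
    have hbs := Stmt19Aux.bstat hAsymm hApos hS hJ hmin
      (A v + Stmt19Aux.Qhat K ybar v) v hv (hffmin v)
    have h1 : ⟪gu, A v + Stmt19Aux.Qhat K ybar v⟫
        = ⟪gu, A v⟫ + ⟪gu, Stmt19Aux.Qhat K ybar v⟫ := inner_add_right _ _ _
    have h2 : ⟪gu, A v⟫ = -⟪A p, v⟫ := by
      rw [hgup, inner_neg_left, hAsymm p v]
    have hpq : ⟪p, Stmt19Aux.Qhat K ybar v⟫ = ⟪Stmt19Aux.Qhat K ybar p, v⟫ := by
      calc ⟪p, Stmt19Aux.Qhat K ybar v⟫ = ⟪Stmt19Aux.Qhat K ybar v, p⟫ := real_inner_comm _ _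
      _ = Stmt19Aux.BB K ybar v p := Stmt19Aux.Qhat_inner K ybar v p
      _ = Stmt19Aux.BB K ybar p v := Stmt19Aux.BB_symm K ybar v p
      _ = ⟪Stmt19Aux.Qhat K ybar p, v⟫ := (Stmt19Aux.Qhat_inner K ybar p v).symm
    have h3 : ⟪gu, Stmt19Aux.Qhat K ybar v⟫ = -⟪Stmt19Aux.Qhat K ybar p, v⟫ := by
      rw [hgup, inner_neg_left, hpq]
    have hμv : ⟪μ, v⟫ = ⟪gy, v⟫ - ⟪A p, v⟫ - ⟪Stmt19Aux.Qhat K ybar p, v⟫ := by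
      rw [hμ_def, inner_sub_left, inner_sub_left]
    linarith [hbs, h1, h2, h3, hμv]
  refine ⟨q, p, μ, hq1, hq2, hq3, ?_, hpK, hμpos, ?_⟩
  · intro v
    rw [Stmt19Aux.stmt_sum K ybar p v]
    have hsub : gy - μ = A p + Stmt19Aux.Qhat K ybar p := by
      rw [hμ_def]; abel
    rw [hsub, inner_add_left, Stmt19Aux.Qhat_inner K ybar p v]
  · rw [hp_def]
    abel
end
end
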